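/- arXiv:2604.11345 — 8 statements merged into one kernel-verified Lean document; each statement's English description precedes it below -/
import Mathlib

section
/- Under the Weierstrass decomposition, historical data, and persistent excitation hypotheses, a triple of sequences u : ℕ → ℝ^m, x : ℕ → ℝ^n, y : ℕ → ℝ^p is a trajectory of the descriptor system (i.e. E x(k+1) = A x(k) + B u(k) and y(k) = C x(k) for all k ∈ ℕ) if and only if for every k ∈ ℕ the stacked vector col(x(k), x(k+1), u(k), y(k), y(k+1)) ∈ ℝ^{2n+m+2p} lies in the column space (real span of the columns) of the stacked data matrix col(X_p, X_f, U_p, Y_p, Y_f) ∈ ℝ^{(2n+m+2p)×T}. -/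
open Matrix

noncomputable section

/-- Data matrix of depth `T` whose `k`-th column is `f (k + off)`. -/
def histMat {ι : Type} (T : ℕ) (f : ℕ → ι → ℝ) (off : ℕ) : Matrix ι (Fin T) ℝ :=
  Matrix.of fun i k => f ((k : ℕ) + off) i

/-- A real square matrix is Schur stable if every complex eigenvalue has modulus `< 1`. -/
def SchurStable {n : ℕ} (M : Matrix (Fin n) (Fin n) ℝ) : Prop :=
  ∀ μ ∈ spectrum ℂ (M.map (fun r : ℝ => (r : ℂ))), ‖μ‖ < 1

/-- View a real matrix as a complex matrix. -/
def cmap {a b : Type} (M : Matrix a b ℝ) : Matrix a b ℂ := M.map (fun r => (r : ℂ))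

lemma histMat_mulVec {ι : Type} (T : ℕ) (f : ℕ → ι → ℝ) (off : ℕ) (g : Fin T → ℝ) :
    histMat T f off *ᵥ g = ∑ t : Fin T, g t • f ((t : ℕ) + off) := by
  funext i
  simp [histMat, Matrix.mulVec, dotProduct, Finset.sum_apply, mul_comm]

lemma mulVec_sum_smul {a b : Type} [Fintype b] {T : ℕ} (M : Matrix a b ℝ)
    (g : Fin T → ℝ) (v : Fin T → b → ℝ) :
    M *ᵥ (∑ t : Fin T, g t • v t) = ∑ t : Fin T, g t • (M *ᵥ v t) := by
  show M.mulVecLin _ = _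
  rw [map_sum]
  simp [Matrix.mulVecLin_apply]

lemma sum_elim_eq_iff {α β γ : Type*} (f f' : α → γ) (g g' : β → γ) :
    Sum.elim f g = Sum.elim f' g' ↔ f = f' ∧ g = g' := by
  constructor
  · intro h
    exact ⟨funext fun i => congrFun h (.inl i), funext fun i => congrFun h (.inr i)⟩
  · rintro ⟨rfl, rfl⟩; rfl

lemma sum_elim_add {α β γ : Type*} [AddCommMonoid γ] (f f' : α → γ) (g g' : β → γ) :
    Sum.elim f g + Sum.elim f' g' = Sum.elim (f + f') (g + g') := by
  funext i; cases i <;> simp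

lemma mulVec_finset_sum {a b ι : Type*} [Fintype b] (M : Matrix a b ℝ) (s : Finset ι)
    (v : ι → b → ℝ) : M *ᵥ (∑ i ∈ s, v i) = ∑ i ∈ s, M *ᵥ v i := by
  show M.mulVecLin _ = _
  rw [map_sum]
  simp only [Matrix.mulVecLin_apply]

theorem stmt_0 (n1 n2 s m p T : ℕ) (hs : 1 ≤ s) (hT : 1 ≤ T)
    (E A : Matrix (Fin (n1 + n2)) (Fin (n1 + n2)) ℝ)
    (B : Matrix (Fin (n1 + n2)) (Fin m) ℝ)
    (C : Matrix (Fin p) (Fin (n1 + n2)) ℝ)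
    (S P : Matrix (Fin (n1 + n2)) (Fin (n1 + n2)) ℝ)
    (hS : IsUnit S) (hP : IsUnit P)
    (A1 : Matrix (Fin n1) (Fin n1) ℝ) (R : Matrix (Fin n2) (Fin n2) ℝ)
    (B1 : Matrix (Fin n1) (Fin m) ℝ) (B2 : Matrix (Fin n2) (Fin m) ℝ)
    (C1 : Matrix (Fin p) (Fin n1) ℝ) (C2 : Matrix (Fin p) (Fin n2) ℝ)
    (hR : R ^ s = 0)
    (hE : (S * E * P).submatrix ⇑finSumFinEquiv ⇑finSumFinEquiv = Matrix.fromBlocks 1 0 0 R)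
    (hA : (S * A * P).submatrix ⇑finSumFinEquiv ⇑finSumFinEquiv = Matrix.fromBlocks A1 0 0 1)
    (hB : (S * B).submatrix ⇑finSumFinEquiv id = Matrix.fromRows B1 B2)
    (hC : (C * P).submatrix id ⇑finSumFinEquiv = Matrix.fromCols C1 C2)
    (ud : ℕ → Fin m → ℝ) (z1d : ℕ → Fin n1 → ℝ) (z2d : ℕ → Fin n2 → ℝ)
    (xd : ℕ → Fin (n1 + n2) → ℝ) (yd : ℕ → Fin p → ℝ)
    (hz1 : ∀ k < T, z1d (k + 1) = A1 *ᵥ z1d k + B1 *ᵥ ud k)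
    (hz2 : ∀ k ≤ T, z2d k = -(∑ j ∈ Finset.range s, ((R ^ j * B2) *ᵥ ud (k + j))))
    (hxd : ∀ k ≤ T, xd k = P *ᵥ (fun i => Sum.elim (z1d k) (z2d k) (finSumFinEquiv.symm i)))
    (hyd : ∀ k ≤ T, yd k = C *ᵥ xd k)
    (hPE : (Matrix.of fun (i : Fin n1 ⊕ (Fin (s + 1) × Fin m)) (k : Fin T) =>
        Sum.elim (z1d (k : ℕ))
          (fun jl => ud ((k : ℕ) + (jl.1 : ℕ)) jl.2) i).rank = n1 + (s + 1) * m)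
    (u : ℕ → Fin m → ℝ) (x : ℕ → Fin (n1 + n2) → ℝ) (y : ℕ → Fin p → ℝ) :
    ((∀ k : ℕ, E *ᵥ x (k + 1) = A *ᵥ x k + B *ᵥ u k) ∧ (∀ k : ℕ, y k = C *ᵥ x k))
      ↔ (∀ k : ℕ, ∃ g : Fin T → ℝ,
          histMat T xd 0 *ᵥ g = x k ∧
          histMat T xd 1 *ᵥ g = x (k + 1) ∧
          histMat T ud 0 *ᵥ g = u k ∧
          histMat T yd 0 *ᵥ g = y k ∧
          histMat T yd 1 *ᵥ g = y (k + 1)) := by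
  have hPi : Invertible P := hP.invertible
  have hSi : Invertible S := hS.invertible
  set e := @finSumFinEquiv n1 n2 with he
  -- splitting map
  set sp : (Fin (n1 + n2) → ℝ) → (Fin n1 ⊕ Fin n2 → ℝ) := fun v => (P⁻¹ *ᵥ v) ∘ e with hsp
  -- key equivalence for the dynamics
  have key : ∀ a b : Fin (n1 + n2) → ℝ, ∀ c : Fin m → ℝ,
      (E *ᵥ a = A *ᵥ b + B *ᵥ c) ↔
      ((sp a ∘ Sum.inl = A1 *ᵥ (sp b ∘ Sum.inl) + B1 *ᵥ c) ∧
       (R *ᵥ (sp a ∘ Sum.inr) = sp b ∘ Sum.inr + B2 *ᵥ c)) := by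
    have step : ∀ (M : Matrix (Fin (n1 + n2)) (Fin (n1 + n2)) ℝ) (w : Fin (n1 + n2) → ℝ),
        (M *ᵥ w) ∘ ⇑e = M.submatrix ⇑e ⇑e *ᵥ (w ∘ ⇑e) := by
      intro M w
      have hw : (w ∘ ⇑e) ∘ ⇑e.symm = w := by funext i; simp
      rw [Matrix.submatrix_mulVec_equiv, hw]
    have stepB : ∀ c : Fin m → ℝ, ((S * B) *ᵥ c) ∘ ⇑e = Matrix.fromRows B1 B2 *ᵥ c := by
      intro c
      rw [← hB]
      have : (S * B).submatrix (⇑e) id = (S * B).submatrix (⇑e) ⇑(Equiv.refl (Fin m)) := rfl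
      rw [this, Matrix.submatrix_mulVec_equiv]
      rfl
    intro a b c
    have h1 : (E *ᵥ a = A *ᵥ b + B *ᵥ c) ↔
        ((S * E * P) *ᵥ (P⁻¹ *ᵥ a)) ∘ ⇑e
          = ((S * A * P) *ᵥ (P⁻¹ *ᵥ b)) ∘ ⇑e + ((S * B) *ᵥ c) ∘ ⇑e := by
      rw [Matrix.mulVec_mulVec, Matrix.mulVec_mulVec,
        Matrix.mul_inv_cancel_right_of_invertible, Matrix.mul_inv_cancel_right_of_invertible,
        ← Matrix.mulVec_mulVec, ← Matrix.mulVec_mulVec (v := b), ← Matrix.mulVec_mulVec (v := c)]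
      constructor
      · intro h; rw [h, Matrix.mulVec_add]; rfl
      · intro h
        apply Matrix.mulVec_injective_of_invertible S
        rw [Matrix.mulVec_add]
        funext i
        have h2 := congrFun h (e.symm i)
        simpa using h2
    rw [h1, step (S * E * P), step (S * A * P), hE, hA, stepB,
      Matrix.fromBlocks_mulVec, Matrix.fromBlocks_mulVec, Matrix.fromRows_mulVec]
    simp only [Matrix.one_mulVec, Matrix.zero_mulVec, add_zero, zero_add]
    rw [sum_elim_add, sum_elim_eq_iff]
  -- key identity for the output
  have keyC : ∀ b : Fin (n1 + n2) → ℝ,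
      C *ᵥ b = C1 *ᵥ (sp b ∘ Sum.inl) + C2 *ᵥ (sp b ∘ Sum.inr) := by
    intro b
    have h0 : C *ᵥ b = (C * P) *ᵥ (P⁻¹ *ᵥ b) := by
      rw [Matrix.mulVec_mulVec, Matrix.mul_inv_cancel_right_of_invertible]
    have h2 : (C * P) *ᵥ (P⁻¹ *ᵥ b) = (C * P).submatrix id ⇑e *ᵥ (sp b) := by
      rw [Matrix.submatrix_mulVec_equiv]
      have : sp b ∘ ⇑e.symm = P⁻¹ *ᵥ b := by funext i; simp [hsp]
      rw [this]
      rfl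
    rw [h0, h2, hC]
    conv_lhs => rw [← Sum.elim_comp_inl_inr (sp b)]
    rw [Matrix.fromCols_mulVec_sumElim]
  -- recombination
  have keyP : ∀ v1 : Fin n1 → ℝ, ∀ v2 : Fin n2 → ℝ,
      sp (P *ᵥ (fun i => Sum.elim v1 v2 (e.symm i))) = Sum.elim v1 v2 := by
    intro v1 v2
    funext i
    simp [hsp, Matrix.mulVec_mulVec, Matrix.inv_mul_of_invertible, Matrix.one_mulVec]
  have keyP2 : ∀ v : Fin (n1 + n2) → ℝ,
      v = P *ᵥ (fun i => Sum.elim (sp v ∘ Sum.inl) (sp v ∘ Sum.inr) (e.symm i)) := by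
    intro v
    have : (fun i => Sum.elim (sp v ∘ Sum.inl) (sp v ∘ Sum.inr) (e.symm i)) = P⁻¹ *ᵥ v := by
      funext i; simp [hsp, Sum.elim_comp_inl_inr]
    rw [this, Matrix.mulVec_mulVec, Matrix.mul_inv_of_invertible, Matrix.one_mulVec]
  -- data splits
  have hspd : ∀ k ≤ T, sp (xd k) = Sum.elim (z1d k) (z2d k) := by
    intro k hk
    rw [hxd k hk]
    exact keyP _ _
  -- data satisfies the dynamics
  have hEd : ∀ t < T, E *ᵥ xd (t + 1) = A *ᵥ xd t + B *ᵥ ud t := by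
    intro t ht
    rw [key]
    have h1 := hspd t (le_of_lt ht)
    have h2 := hspd (t + 1) ht
    rw [h1, h2]
    simp only [Sum.elim_comp_inl, Sum.elim_comp_inr]
    refine ⟨hz1 t ht, ?_⟩
    rw [hz2 (t + 1) ht, hz2 t (le_of_lt ht), Matrix.mulVec_neg, mulVec_finset_sum]
    have hterm : ∀ j ∈ Finset.range s,
        R *ᵥ ((R ^ j * B2) *ᵥ ud (t + 1 + j))
          = (R ^ (j + 1) * B2) *ᵥ ud (t + (j + 1)) := by
      intro j _
      rw [Matrix.mulVec_mulVec, ← Matrix.mul_assoc, ← pow_succ']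
      have hj : t + 1 + j = t + (j + 1) := by omega
      rw [hj]
    rw [Finset.sum_congr rfl hterm]
    have hFs : (R ^ s * B2) *ᵥ ud (t + s) = 0 := by
      rw [hR, Matrix.zero_mul, Matrix.zero_mulVec]
    have hshift : ∑ j ∈ Finset.range s, (R ^ (j + 1) * B2) *ᵥ ud (t + (j + 1))
        = (∑ j ∈ Finset.range s, (R ^ j * B2) *ᵥ ud (t + j)) - (R ^ 0 * B2) *ᵥ ud (t + 0) := by
      rw [eq_sub_iff_add_eq, ← Finset.sum_range_succ' (fun j => (R ^ j * B2) *ᵥ ud (t + j)) s,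
        Finset.sum_range_succ, hFs, add_zero]
    rw [hshift]
    simp [Matrix.one_mulVec]
    abel
  constructor
  · -- trajectory → RHS
    rintro ⟨hdyn, hout⟩ k
    set z1 : ℕ → Fin n1 → ℝ := fun k' => sp (x k') ∘ Sum.inl with hz1def
    set z2 : ℕ → Fin n2 → ℝ := fun k' => sp (x k') ∘ Sum.inr with hz2def
    have hdyn' : ∀ k', (z1 (k' + 1) = A1 *ᵥ z1 k' + B1 *ᵥ u k') ∧
        (R *ᵥ z2 (k' + 1) = z2 k' + B2 *ᵥ u k') := fun k' => (key _ _ _).mp (hdyn k')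
    have hfast : ∀ k' t, z2 k' = (R ^ t) *ᵥ z2 (k' + t)
        - ∑ j ∈ Finset.range t, (R ^ j * B2) *ᵥ u (k' + j) := by
      intro k' t
      induction t with
      | zero => simp [Matrix.one_mulVec]
      | succ t ih =>
        rw [ih, Finset.sum_range_succ]
        have h2 : z2 (k' + t) = R *ᵥ z2 (k' + t + 1) - B2 *ᵥ u (k' + t) := by
          rw [eq_sub_iff_add_eq]
          exact ((hdyn' (k' + t)).2).symm
        have h3 : (R ^ t) *ᵥ z2 (k' + t)
            = (R ^ (t + 1)) *ᵥ z2 (k' + (t + 1)) - (R ^ t * B2) *ᵥ u (k' + t) := by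
          rw [h2, Matrix.mulVec_sub, Matrix.mulVec_mulVec, Matrix.mulVec_mulVec, ← pow_succ]
          have h4 : k' + t + 1 = k' + (t + 1) := by omega
          rw [h4]
        rw [h3]
        abel
    have hz2sol : ∀ k', z2 k' = -(∑ j ∈ Finset.range s, (R ^ j * B2) *ᵥ u (k' + j)) := by
      intro k'
      have h := hfast k' s
      rwa [hR, Matrix.zero_mulVec, zero_sub] at h
    -- persistent excitation gives surjectivity
    have hsurj : Function.Surjective
        (Matrix.of fun (i : Fin n1 ⊕ (Fin (s + 1) × Fin m)) (t : Fin T) =>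
          Sum.elim (z1d (t : ℕ)) (fun jl => ud ((t : ℕ) + (jl.1 : ℕ)) jl.2) i).mulVecLin := by
      rw [← LinearMap.range_eq_top]
      apply Submodule.eq_top_of_finrank_eq
      rw [← Matrix.rank, hPE]
      simp [mul_comm]
    obtain ⟨g, hg⟩ := hsurj (Sum.elim (z1 k) fun jl => u (k + (jl.1 : ℕ)) jl.2)
    have hg1 : (∑ t : Fin T, g t • z1d (t : ℕ)) = z1 k := by
      funext i
      have h := congrFun hg (Sum.inl i)
      simpa [Matrix.mulVecLin_apply, Matrix.mulVec, dotProduct,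
        Finset.sum_apply, mul_comm] using h
    have hgu : ∀ j ≤ s, (∑ t : Fin T, g t • ud ((t : ℕ) + j)) = u (k + j) := by
      intro j hj
      funext l
      have h := congrFun hg (Sum.inr (⟨j, by omega⟩, l))
      simpa [Matrix.mulVecLin_apply, Matrix.mulVec, dotProduct,
        Finset.sum_apply, mul_comm] using h
    have hsum2 : ∀ c : ℕ, c ≤ 1 → (∑ t : Fin T, g t • z2d ((t : ℕ) + c)) = z2 (k + c) := by
      intro c hc
      have hterm : ∀ t : Fin T, t ∈ Finset.univ → g t • z2d ((t : ℕ) + c)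
          = -∑ j ∈ Finset.range s, g t • ((R ^ j * B2) *ᵥ ud ((t : ℕ) + c + j)) := by
        intro t _
        rw [hz2 ((t : ℕ) + c) (by omega), smul_neg, Finset.smul_sum]
      rw [Finset.sum_congr rfl hterm, Finset.sum_neg_distrib, Finset.sum_comm]
      have hinner : ∀ j ∈ Finset.range s,
          (∑ t : Fin T, g t • ((R ^ j * B2) *ᵥ ud ((t : ℕ) + c + j)))
            = (R ^ j * B2) *ᵥ u ((k + c) + j) := by
        intro j hj
        have hj' : c + j ≤ s := by
          have := Finset.mem_range.mp hj; omega
        have harg : ∀ t : Fin T, (t : ℕ) + c + j = (t : ℕ) + (c + j) := fun t => by omega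
        calc (∑ t : Fin T, g t • ((R ^ j * B2) *ᵥ ud ((t : ℕ) + c + j)))
            = (R ^ j * B2) *ᵥ (∑ t : Fin T, g t • ud ((t : ℕ) + (c + j))) := by
              rw [mulVec_sum_smul]
              exact Finset.sum_congr rfl fun t _ => by rw [harg t]
          _ = (R ^ j * B2) *ᵥ u (k + (c + j)) := by rw [hgu (c + j) hj']
          _ = (R ^ j * B2) *ᵥ u ((k + c) + j) := by rw [show k + (c + j) = (k + c) + j by omega]
      rw [Finset.sum_congr rfl hinner]
      exact (hz2sol (k + c)).symm
    have hgu0 : (∑ t : Fin T, g t • ud (t : ℕ)) = u k := by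
      have h := hgu 0 (by omega)
      simpa using h
    have hsum11 : (∑ t : Fin T, g t • z1d ((t : ℕ) + 1)) = z1 (k + 1) := by
      have hterm : ∀ t : Fin T, t ∈ Finset.univ →
          g t • z1d ((t : ℕ) + 1) = g t • (A1 *ᵥ z1d (t : ℕ)) + g t • (B1 *ᵥ ud (t : ℕ)) := by
        intro t _
        rw [hz1 (t : ℕ) t.isLt, smul_add]
      rw [Finset.sum_congr rfl hterm, Finset.sum_add_distrib, ← mulVec_sum_smul,
        ← mulVec_sum_smul, hg1, hgu0]
      exact ((hdyn' k).1).symm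
    have hx : ∀ c : ℕ, c ≤ 1 → (∑ t : Fin T, g t • z1d ((t : ℕ) + c)) = z1 (k + c) →
        histMat T xd c *ᵥ g = x (k + c) := by
      intro c hc hs1
      rw [histMat_mulVec]
      have hterm : ∀ t : Fin T, t ∈ Finset.univ → g t • xd ((t : ℕ) + c)
          = g t • (P *ᵥ fun i => Sum.elim (z1d ((t : ℕ) + c)) (z2d ((t : ℕ) + c)) (e.symm i)) := by
        intro t _
        rw [hxd ((t : ℕ) + c) (by omega)]
      rw [Finset.sum_congr rfl hterm, ← mulVec_sum_smul]
      have elim_sum : (∑ t : Fin T, g t • Sum.elim (z1d ((t : ℕ) + c)) (z2d ((t : ℕ) + c)))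
          = Sum.elim (∑ t : Fin T, g t • z1d ((t : ℕ) + c)) (∑ t : Fin T, g t • z2d ((t : ℕ) + c)) := by
        funext i
        cases i <;> simp [Finset.sum_apply]
      have hcol : (∑ t : Fin T, g t • fun i =>
            Sum.elim (z1d ((t : ℕ) + c)) (z2d ((t : ℕ) + c)) (e.symm i))
          = fun i => Sum.elim (z1 (k + c)) (z2 (k + c)) (e.symm i) := by
        funext i
        have h1 := congrFun elim_sum (e.symm i)
        simp only [Finset.sum_apply, Pi.smul_apply] at h1 ⊢
        rw [h1, hs1, hsum2 c hc]
      rw [hcol]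
      exact (keyP2 (x (k + c))).symm
    have hx0 : histMat T xd 0 *ᵥ g = x k := by
      have h := hx 0 (by omega) (by simpa using hg1)
      simpa using h
    have hx1 : histMat T xd 1 *ᵥ g = x (k + 1) := hx 1 (by omega) hsum11
    have hyc : ∀ c : ℕ, c ≤ 1 → histMat T xd c *ᵥ g = x (k + c) →
        histMat T yd c *ᵥ g = y (k + c) := by
      intro c hc hxc
      rw [histMat_mulVec]
      have hterm : ∀ t : Fin T, t ∈ Finset.univ →
          g t • yd ((t : ℕ) + c) = g t • (C *ᵥ xd ((t : ℕ) + c)) := by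
        intro t _
        rw [hyd ((t : ℕ) + c) (by omega)]
      rw [Finset.sum_congr rfl hterm, ← mulVec_sum_smul, ← histMat_mulVec, hxc]
      exact (hout (k + c)).symm
    have hy0 : histMat T yd 0 *ᵥ g = y k := by
      have h := hyc 0 (by omega) (by simpa using hx0)
      simpa using h
    have hy1 : histMat T yd 1 *ᵥ g = y (k + 1) := hyc 1 (by omega) hx1
    have hu0 : histMat T ud 0 *ᵥ g = u k := by
      rw [histMat_mulVec]
      simpa using hgu0
    exact ⟨g, hx0, hx1, hu0, hy0, hy1⟩
  · -- RHS → trajectory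
    intro hRHS
    constructor
    · intro k
      obtain ⟨g, h0, h1, hu0, -, -⟩ := hRHS k
      rw [← h0, ← h1, ← hu0, histMat_mulVec, histMat_mulVec, histMat_mulVec,
        mulVec_sum_smul, mulVec_sum_smul, mulVec_sum_smul, ← Finset.sum_add_distrib]
      refine Finset.sum_congr rfl fun t _ => ?_
      rw [← smul_add]
      congr 1
      simpa using hEd t t.isLt
    · intro k
      obtain ⟨g, h0, -, -, hy0, -⟩ := hRHS k
      rw [← hy0, ← h0, histMat_mulVec, histMat_mulVec, mulVec_sum_smul]
      refine Finset.sum_congr rfl fun t _ => ?_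
      congr 1
      simpa using hyd ((t : ℕ) + 0) (by omega)
end
end

section
/- Let E, A ∈ ℝ^{n×n}, B ∈ ℝ^{n×m}, C ∈ ℝ^{p×n}, and assume the (n+p) × n stacked matrix col(E, C) has rank n. Then, for historical data generated by the descriptor system, every g ∈ ℝ^T with X_p·g = 0, U_p·g = 0 and Y_f·g = 0 satisfies X_f·g = 0; equivalently, there exist matrices M1 ∈ ℝ^{n×n}, M2 ∈ ℝ^{n×m}, M3 ∈ ℝ^{n×p} such that X_f = M1·X_p + M2·U_p + M3·Y_f. -/
open Matrix

noncomputable section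

theorem stmt_2 (n m p T : ℕ) (hT : 1 ≤ T)
    (E A : Matrix (Fin n) (Fin n) ℝ) (B : Matrix (Fin n) (Fin m) ℝ)
    (C : Matrix (Fin p) (Fin n) ℝ)
    (hEC : (Matrix.fromRows E C).rank = n)
    (xd : ℕ → Fin n → ℝ) (ud : ℕ → Fin m → ℝ) (yd : ℕ → Fin p → ℝ)
    (hdyn : ∀ k < T, E *ᵥ xd (k + 1) = A *ᵥ xd k + B *ᵥ ud k)
    (hyd : ∀ k ≤ T, yd k = C *ᵥ xd k) :
    (∀ g : Fin T → ℝ, histMat T xd 0 *ᵥ g = 0 → histMat T ud 0 *ᵥ g = 0 →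
        histMat T yd 1 *ᵥ g = 0 → histMat T xd 1 *ᵥ g = 0) ∧
    (∃ (M1 : Matrix (Fin n) (Fin n) ℝ) (M2 : Matrix (Fin n) (Fin m) ℝ)
        (M3 : Matrix (Fin n) (Fin p) ℝ),
      histMat T xd 1 = M1 * histMat T xd 0 + M2 * histMat T ud 0 + M3 * histMat T yd 1) := by
  classical
  set D : Matrix (Fin n ⊕ Fin p) (Fin n) ℝ := Matrix.fromRows E C with hD
  set Xp := histMat T xd 0
  set Xf := histMat T xd 1
  set Up := histMat T ud 0
  set Yf := histMat T yd 1
  -- ker of D is trivial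
  have hker : LinearMap.ker D.mulVecLin = ⊥ := by
    have h1 := LinearMap.finrank_range_add_finrank_ker D.mulVecLin
    rw [Module.finrank_pi ℝ, Fintype.card_fin] at h1
    have h2 : Module.finrank ℝ (LinearMap.range D.mulVecLin) = n := hEC
    have h3 : Module.finrank ℝ (LinearMap.ker D.mulVecLin) = 0 := by omega
    exact Submodule.finrank_eq_zero.mp h3
  -- Dᵀ * D is a unit
  have hGunit : IsUnit (Dᵀ * D) := by
    rw [← Matrix.mulVec_injective_iff_isUnit]
    intro u v huv
    have hu0 : (Dᵀ * D) *ᵥ (u - v) = 0 := by rw [Matrix.mulVec_sub, huv, sub_self]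
    have hu : u - v ∈ LinearMap.ker (Dᵀ * D).mulVecLin := by
      rwa [LinearMap.mem_ker, Matrix.mulVecLin_apply]
    rw [Matrix.ker_mulVecLin_transpose_mul_self, hker, Submodule.mem_bot, sub_eq_zero] at hu
    exact hu
  have hLD : ((Dᵀ * D)⁻¹ * Dᵀ) * D = 1 := by
    rw [Matrix.mul_assoc, Matrix.nonsing_inv_mul _ (Matrix.isUnit_iff_isUnit_det _ |>.mp hGunit)]
  -- dynamics in matrix form
  have hE : E * Xf = A * Xp + B * Up := by
    ext i k
    have h := congrFun (hdyn k k.isLt) i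
    simpa [Xf, Xp, Up, histMat, Matrix.mul_apply, Matrix.mulVec, dotProduct] using h
  have hC : C * Xf = Yf := by
    ext i k
    have h := congrFun (hyd (k + 1) k.isLt) i
    simpa [Xf, Yf, histMat, Matrix.mul_apply, Matrix.mulVec, dotProduct] using h.symm
  have hDXf : D * Xf = Matrix.fromRows (A * Xp + B * Up) Yf := by
    rw [hD, Matrix.fromRows_mul, hE, hC]
  -- the key decomposition
  set G := (Dᵀ * D)⁻¹
  have key : Xf = (G * Eᵀ * A) * Xp + (G * Eᵀ * B) * Up + (G * Cᵀ) * Yf := by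
    calc Xf = (((Dᵀ * D)⁻¹ * Dᵀ) * D) * Xf := by rw [hLD, Matrix.one_mul]
    _ = G * (Dᵀ * (D * Xf)) := by rw [Matrix.mul_assoc, Matrix.mul_assoc]
    _ = G * (Matrix.fromCols Eᵀ Cᵀ * Matrix.fromRows (A * Xp + B * Up) Yf) := by
        rw [hDXf, hD, Matrix.transpose_fromRows]
    _ = G * (Eᵀ * (A * Xp + B * Up) + Cᵀ * Yf) := by rw [Matrix.fromCols_mul_fromRows]
    _ = (G * Eᵀ * A) * Xp + (G * Eᵀ * B) * Up + (G * Cᵀ) * Yf := by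
        rw [Matrix.mul_add, Matrix.mul_add, Matrix.mul_add]
        simp only [Matrix.mul_assoc, add_assoc]
  refine ⟨?_, (G * Eᵀ * A), (G * Eᵀ * B), (G * Cᵀ), key⟩
  intro g hXp hUp hYf
  rw [key]
  simp [Matrix.add_mulVec, ← Matrix.mulVec_mulVec, hXp, hUp, hYf]
end
end

section
/- Let X_p, X_f ∈ ℝ^{n×T}, U_p ∈ ℝ^{m×T}, Y_p, Y_f ∈ ℝ^{p×T}, and C ∈ ℝ^{p×n} with Y_p = C·X_p. Suppose there exist matrices Σ_{X_p} ∈ ℝ^{n×n}, Σ_{U_p} ∈ ℝ^{n×m}, Σ_{Y_p} ∈ ℝ^{n×p}, Σ_{Y_f} ∈ ℝ^{n×p} such that X_f = Σ_{X_p}·X_p + Σ_{U_p}·U_p + Σ_{Y_p}·Y_p + Σ_{Y_f}·Y_f and Σ_{X_p} is Schur stable. Then for every λ ∈ ℂ with |λ| ≥ 1, the rank over ℂ of the stacked matrix col(λ·X_p − X_f, U_p, Y_p, Y_f) equals the rank of the stacked matrix col(X_p, U_p, Y_f) (where the real matrices are viewed as complex matrices). -/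
open Matrix Submodule

noncomputable section

lemma cmap_mul {a b c : Type} [Fintype b] (M : Matrix a b ℝ) (N : Matrix b c ℝ) :
    cmap (M * N) = cmap M * cmap N := by
  ext i j
  simp [cmap, Matrix.mul_apply]

lemma cmap_add {a b : Type} (M N : Matrix a b ℝ) : cmap (M + N) = cmap M + cmap N := by
  ext i j; simp [cmap]

lemma range_fromRows {a b c : Type} (A : Matrix a c ℂ) (B : Matrix b c ℂ) :
    Set.range (Matrix.fromRows A B) = Set.range A ∪ Set.range B := by
  rw [Matrix.fromRows]
  exact Set.Sum.elim_range A B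

lemma span_range_mul_le {a b c : Type} [Fintype b] (M : Matrix a b ℂ) (N : Matrix b c ℂ) :
    span ℂ (Set.range (M * N)) ≤ span ℂ (Set.range N) := by
  rw [Submodule.span_le]
  rintro _ ⟨i, rfl⟩
  have h : (M * N) i = ∑ j, M i j • N j := by
    ext k; simp [Matrix.mul_apply, Finset.sum_apply]
  rw [h]
  exact Submodule.sum_mem _ fun j _ => Submodule.smul_mem _ _ (Submodule.subset_span ⟨j, rfl⟩)

lemma span_range_add_le {a c : Type} (A B : Matrix a c ℂ) :
    span ℂ (Set.range (A + B)) ≤ span ℂ (Set.range A) ⊔ span ℂ (Set.range B) := by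
  rw [Submodule.span_le]
  rintro _ ⟨i, rfl⟩
  exact Submodule.add_mem _ (Submodule.mem_sup_left (Submodule.subset_span ⟨i, rfl⟩))
    (Submodule.mem_sup_right (Submodule.subset_span ⟨i, rfl⟩))

theorem stmt_3 (n m p T : ℕ)
    (Xp Xf : Matrix (Fin n) (Fin T) ℝ) (Up : Matrix (Fin m) (Fin T) ℝ)
    (Yp Yf : Matrix (Fin p) (Fin T) ℝ) (C : Matrix (Fin p) (Fin n) ℝ)
    (hYp : Yp = C * Xp)
    (SXp : Matrix (Fin n) (Fin n) ℝ) (SUp : Matrix (Fin n) (Fin m) ℝ)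
    (SYp SYf : Matrix (Fin n) (Fin p) ℝ)
    (hSig : Xf = SXp * Xp + SUp * Up + SYp * Yp + SYf * Yf)
    (hSchur : SchurStable SXp) :
    ∀ lam : ℂ, 1 ≤ ‖lam‖ →
      (Matrix.fromRows (lam • cmap Xp - cmap Xf)
        (Matrix.fromRows (cmap Up) (Matrix.fromRows (cmap Yp) (cmap Yf)))).rank
      = (Matrix.fromRows (cmap Xp) (Matrix.fromRows (cmap Up) (cmap Yf))).rank := by
  intro lam hlam
  set D : Matrix (Fin n) (Fin n) ℂ := lam • (1 : Matrix (Fin n) (Fin n) ℂ) - cmap SXp with hDdef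
  -- D is invertible
  have hnot : lam ∉ spectrum ℂ (cmap SXp) := fun h => absurd (hSchur lam h) (not_lt.2 hlam)
  have hDunit : IsUnit D := by
    rw [spectrum.notMem_iff, Algebra.algebraMap_eq_smul_one] at hnot
    exact hnot
  have hD : IsUnit D.det := (Matrix.isUnit_iff_isUnit_det D).mp hDunit
  -- complexified identities
  have hXf : cmap Xf = cmap SXp * cmap Xp + cmap SUp * cmap Up
      + cmap SYp * cmap Yp + cmap SYf * cmap Yf := by
    rw [hSig, cmap_add, cmap_add, cmap_add, cmap_mul, cmap_mul, cmap_mul, cmap_mul]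
  have hYpC : cmap Yp = cmap C * cmap Xp := by rw [hYp, cmap_mul]
  have hs : D * cmap Xp = lam • cmap Xp - cmap SXp * cmap Xp := by
    rw [hDdef, Matrix.sub_mul, Matrix.smul_mul, Matrix.one_mul]
  have h1 : lam • cmap Xp - cmap Xf = D * cmap Xp
      + ((-cmap SUp) * cmap Up + ((-cmap SYp) * cmap Yp + (-cmap SYf) * cmap Yf)) := by
    rw [hXf, hs]
    simp only [Matrix.neg_mul]
    abel
  have h2 : D * cmap Xp = (lam • cmap Xp - cmap Xf)
      + (cmap SUp * cmap Up + (cmap SYp * cmap Yp + cmap SYf * cmap Yf)) := by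
    rw [hXf, hs]
    abel
  -- row spans
  have f1 : span ℂ (Set.range (cmap Yp)) ≤ span ℂ (Set.range (cmap Xp)) := by
    rw [hYpC]; exact span_range_mul_le _ _
  have f3 : span ℂ (Set.range (cmap Xp)) ≤ span ℂ (Set.range (D * cmap Xp)) := by
    have hx : cmap Xp = D⁻¹ * (D * cmap Xp) := by
      rw [← Matrix.mul_assoc, Matrix.nonsing_inv_mul _ hD, Matrix.one_mul]
    conv_lhs => rw [hx]
    exact span_range_mul_le _ _
  set Vx := span ℂ (Set.range (cmap Xp))
  set Vu := span ℂ (Set.range (cmap Up))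
  set Vyp := span ℂ (Set.range (cmap Yp))
  set Vyf := span ℂ (Set.range (cmap Yf))
  set W := span ℂ (Set.range (lam • cmap Xp - cmap Xf))
  have f2 : span ℂ (Set.range (D * cmap Xp)) ≤ W ⊔ (Vu ⊔ (Vyp ⊔ Vyf)) := by
    rw [h2]
    refine (span_range_add_le _ _).trans (sup_le_sup le_rfl ?_)
    exact (span_range_add_le _ _).trans (sup_le_sup (span_range_mul_le _ _)
      ((span_range_add_le _ _).trans (sup_le_sup (span_range_mul_le _ _) (span_range_mul_le _ _))))
  have f4 : W ≤ Vx ⊔ (Vu ⊔ (Vyp ⊔ Vyf)) := by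
    rw [show W = span ℂ (Set.range (D * cmap Xp
      + ((-cmap SUp) * cmap Up + ((-cmap SYp) * cmap Yp + (-cmap SYf) * cmap Yf)))) by rw [← h1]]
    refine (span_range_add_le _ _).trans (sup_le_sup (span_range_mul_le _ _) ?_)
    exact (span_range_add_le _ _).trans (sup_le_sup (span_range_mul_le _ _)
      ((span_range_add_le _ _).trans (sup_le_sup (span_range_mul_le _ _) (span_range_mul_le _ _))))
  -- conclude
  have hspan : W ⊔ (Vu ⊔ (Vyp ⊔ Vyf)) = Vx ⊔ (Vu ⊔ Vyf) := by
    apply le_antisymm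
    · have hVx : Vx ≤ Vx ⊔ (Vu ⊔ Vyf) := le_sup_left
      have hVu : Vu ≤ Vx ⊔ (Vu ⊔ Vyf) := le_sup_of_le_right le_sup_left
      have hVyf : Vyf ≤ Vx ⊔ (Vu ⊔ Vyf) := le_sup_of_le_right le_sup_right
      have hVyp : Vyp ≤ Vx ⊔ (Vu ⊔ Vyf) := f1.trans hVx
      exact sup_le (f4.trans (sup_le hVx (sup_le hVu (sup_le hVyp hVyf))))
        (sup_le hVu (sup_le hVyp hVyf))
    · have hVu : Vu ≤ W ⊔ (Vu ⊔ (Vyp ⊔ Vyf)) := le_sup_of_le_right le_sup_left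
      have hVyf : Vyf ≤ W ⊔ (Vu ⊔ (Vyp ⊔ Vyf)) :=
        le_sup_of_le_right (le_sup_of_le_right le_sup_right)
      have hVx : Vx ≤ W ⊔ (Vu ⊔ (Vyp ⊔ Vyf)) := f3.trans f2
      exact sup_le hVx (sup_le hVu hVyf)
  rw [Matrix.rank_eq_finrank_span_row, Matrix.rank_eq_finrank_span_row, Matrix.row, Matrix.row,
    range_fromRows, range_fromRows, range_fromRows, range_fromRows, range_fromRows,
    Submodule.span_union, Submodule.span_union, Submodule.span_union,
    Submodule.span_union, Submodule.span_union, hspan]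
end
end

section
/- Assume the Weierstrass decomposition, historical data, and persistent excitation hypotheses, and assume the (n+p) × n stacked matrix col(E, C) has rank n. If for every λ ∈ ℂ with |λ| ≥ 1 the rank over ℂ of col(λ·X_p − X_f, U_p, Y_p, Y_f) equals the rank of col(X_p, U_p, Y_f), then for every λ ∈ ℂ with |λ| ≥ 1 the rank over ℂ of the (n+p) × n matrix col(λ·E − A, C) equals n (i.e. the descriptor system is detectable). -/
open Matrix

noncomputable section

namespace DD

/-- complex linear combination of shifted data -/
def comb {ι : Type} (T : ℕ) (f : ℕ → ι → ℝ) (off : ℕ) (g : Fin T → ℂ) : ι → ℂ :=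
  fun i => ∑ k : Fin T, g k * (f ((k : ℕ) + off) i : ℂ)

lemma cmap_histMat_mulVec {ι : Type} (T : ℕ) (f : ℕ → ι → ℝ) (off : ℕ) (g : Fin T → ℂ) :
    cmap (histMat T f off) *ᵥ g = comb T f off g := by
  ext i
  simp [cmap, histMat, mulVec, dotProduct, comb, mul_comm]

lemma comb_congr' {ι : Type} (T : ℕ) (f h : ℕ → ι → ℝ) (o1 o2 : ℕ) (g : Fin T → ℂ)
    (hfh : ∀ k < T, f (k + o1) = h (k + o2)) : comb T f o1 g = comb T h o2 g := by
  ext i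
  refine Finset.sum_congr rfl fun k _ => ?_
  rw [hfh k k.isLt]

lemma comb_mulVec {ι κ : Type} [Fintype κ] (T : ℕ) (M : Matrix ι κ ℝ) (v : ℕ → κ → ℝ)
    (off : ℕ) (g : Fin T → ℂ) :
    comb T (fun k => M *ᵥ v k) off g = cmap M *ᵥ comb T v off g := by
  ext i
  have L : comb T (fun k => M *ᵥ v k) off g i
      = ∑ k : Fin T, ∑ j : κ, (M i j : ℂ) * (g k * (v ((k : ℕ) + off) j : ℂ)) := by
    refine Finset.sum_congr rfl fun k _ => ?_
    show g k * ((M *ᵥ v ((k : ℕ) + off)) i : ℂ) = _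
    push_cast [mulVec, dotProduct]
    rw [Finset.mul_sum]
    exact Finset.sum_congr rfl fun j _ => by ring
  have Rr : (cmap M *ᵥ comb T v off g) i
      = ∑ j : κ, ∑ k : Fin T, (M i j : ℂ) * (g k * (v ((k : ℕ) + off) j : ℂ)) := by
    simp [cmap, mulVec, dotProduct, comb, Finset.mul_sum]
  rw [L, Rr, Finset.sum_comm]

lemma comb_add {ι : Type} (T : ℕ) (a b : ℕ → ι → ℝ) (off : ℕ) (g : Fin T → ℂ) :
    comb T (fun k => a k + b k) off g = comb T a off g + comb T b off g := by
  ext i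
  simp [comb, Finset.sum_add_distrib, mul_add]

lemma comb_neg {ι : Type} (T : ℕ) (a : ℕ → ι → ℝ) (off : ℕ) (g : Fin T → ℂ) :
    comb T (fun k => -(a k)) off g = -comb T a off g := by
  ext i
  simp [comb, Finset.sum_neg_distrib]

lemma comb_sum {ι : Type} (T : ℕ) {σ : Type} (F : Finset σ) (w : σ → ℕ → ι → ℝ) (off : ℕ)
    (g : Fin T → ℂ) :
    comb T (fun k => ∑ j ∈ F, w j k) off g = ∑ j ∈ F, comb T (w j) off g := by
  ext i
  simp only [comb, Finset.sum_apply]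
  rw [Finset.sum_comm]
  refine Finset.sum_congr rfl fun k _ => ?_
  push_cast
  rw [Finset.mul_sum]

lemma comb_elim {n1 n2 : ℕ} (T : ℕ) (a : ℕ → Fin n1 → ℝ) (b : ℕ → Fin n2 → ℝ) (off : ℕ)
    (g : Fin T → ℂ) :
    comb T (fun k i => Sum.elim (a k) (b k) (finSumFinEquiv.symm i)) off g =
      fun i => Sum.elim (comb T a off g) (comb T b off g) (finSumFinEquiv.symm i) := by
  ext i
  cases h : finSumFinEquiv.symm i <;> simp [comb, h]


lemma sum_elim_eq_zero {α β γ : Type*} [Zero γ] {u : α → γ} {v : β → γ} :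
    Sum.elim u v = 0 ↔ u = 0 ∧ v = 0 := by
  constructor
  · intro h
    constructor <;> ext i
    · exact congrFun h (Sum.inl i)
    · exact congrFun h (Sum.inr i)
  · rintro ⟨h1, h2⟩
    ext (i | i) <;> simp [h1, h2]

lemma ker_eq_bot_of_rank {K : Type*} [Field K] {a b : Type*} [Fintype a] [Fintype b]
    (M : Matrix a b K) (h : M.rank = Fintype.card b) :
    LinearMap.ker M.mulVecLin = ⊥ := by
  have h2 := LinearMap.finrank_range_add_finrank_ker M.mulVecLin
  rw [Module.finrank_pi] at h2
  rw [Matrix.rank] at h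
  rw [← Submodule.finrank_eq_zero (S := LinearMap.ker M.mulVecLin)]
  omega

lemma range_eq_top_of_rank {K : Type*} [Field K] {a b : Type*} [Fintype a] [Fintype b]
    (M : Matrix a b K) (h : M.rank = Fintype.card a) :
    LinearMap.range M.mulVecLin = ⊤ := by
  apply Submodule.eq_top_of_finrank_eq
  rw [← Matrix.rank, h, Module.finrank_pi]

lemma cmap_mulVec_re {a b : Type} [Fintype b] (M : Matrix a b ℝ) (v : b → ℂ) (i : a) :
    ((cmap M *ᵥ v) i).re = (M *ᵥ fun j => (v j).re) i := by
  simp [cmap, mulVec, dotProduct, Complex.mul_re]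

lemma cmap_mulVec_im {a b : Type} [Fintype b] (M : Matrix a b ℝ) (v : b → ℂ) (i : a) :
    ((cmap M *ᵥ v) i).im = (M *ᵥ fun j => (v j).im) i := by
  simp [cmap, mulVec, dotProduct, Complex.mul_im]

lemma cmap_mulVec_ofReal {a b : Type} [Fintype b] (M : Matrix a b ℝ) (v : b → ℝ) :
    cmap M *ᵥ (fun j => (v j : ℂ)) = fun i => ((M *ᵥ v) i : ℂ) := by
  ext i
  push_cast [cmap, mulVec, dotProduct]
  rfl

lemma cmap_mul {a b c : Type} [Fintype b] (M : Matrix a b ℝ) (N : Matrix b c ℝ) :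
    cmap (M * N) = cmap M * cmap N :=
  M.map_mul (f := Complex.ofRealHom)

lemma submatrix_rows_mulVec {n1 n2 : ℕ} {β : Type} [NonUnitalNonAssocSemiring β]
    (M : Matrix (Fin (n1 + n2)) (Fin (n1 + n2)) β)
    (Mb : Matrix (Fin n1 ⊕ Fin n2) (Fin n1 ⊕ Fin n2) β)
    (h : M.submatrix ⇑finSumFinEquiv ⇑finSumFinEquiv = Mb) (v : Fin n1 ⊕ Fin n2 → β) :
    M *ᵥ (fun i => v (finSumFinEquiv.symm i)) =
      fun i => (Mb *ᵥ v) (finSumFinEquiv.symm i) := by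
  funext i
  conv_rhs => rw [← h, Matrix.submatrix_mulVec_equiv M v ⇑finSumFinEquiv finSumFinEquiv]
  simp [Function.comp_def]

lemma submatrix_cols_mulVec {n1 n2 p : ℕ} {β : Type} [NonUnitalNonAssocSemiring β]
    (M : Matrix (Fin p) (Fin (n1 + n2)) β)
    (Mb : Matrix (Fin p) (Fin n1 ⊕ Fin n2) β)
    (h : M.submatrix id ⇑finSumFinEquiv = Mb) (v : Fin n1 ⊕ Fin n2 → β) :
    M *ᵥ (fun i => v (finSumFinEquiv.symm i)) = Mb *ᵥ v := by
  funext i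
  conv_rhs => rw [← h, Matrix.submatrix_mulVec_equiv M v id finSumFinEquiv]
  simp [Function.comp_def]

lemma nilpotent_fixed_zero {n2 : ℕ} (Rc : Matrix (Fin n2) (Fin n2) ℂ) (s : ℕ)
    (hR : Rc ^ s = 0) (lam : ℂ) (w : Fin n2 → ℂ) (hw : w = lam • (Rc *ᵥ w)) : w = 0 := by
  have key : ∀ j : ℕ, w = lam ^ j • ((Rc ^ j) *ᵥ w) := by
    intro j
    induction j with
    | zero => simp
    | succ j ih =>
      calc w = lam ^ j • ((Rc ^ j) *ᵥ w) := ih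
        _ = lam ^ j • ((Rc ^ j) *ᵥ (lam • (Rc *ᵥ w))) := by rw [← hw]
        _ = lam ^ (j + 1) • ((Rc ^ (j + 1)) *ᵥ w) := by
            rw [Matrix.mulVec_smul, Matrix.mulVec_mulVec, smul_smul, ← pow_succ]
            rw [← pow_succ]
  rw [key s, hR]
  simp

end DD

namespace DD

lemma cmap_one {n : ℕ} : cmap (1 : Matrix (Fin n) (Fin n) ℝ) = 1 := by
  ext i j
  simp [cmap, Matrix.one_apply, apply_ite]

lemma cmap_pow {n : ℕ} (M : Matrix (Fin n) (Fin n) ℝ) (j : ℕ) :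
    cmap (M ^ j) = cmap M ^ j := by
  induction j with
  | zero => simpa using cmap_one
  | succ j ih => rw [pow_succ, pow_succ, cmap_mul, ih]

lemma cmap_zero {a b : Type} : cmap (0 : Matrix a b ℝ) = 0 := by
  ext i j; simp [cmap]

lemma cmap_blocks_1R {n1 n2 : ℕ} (R : Matrix (Fin n2) (Fin n2) ℝ) :
    cmap (Matrix.fromBlocks (1 : Matrix (Fin n1) (Fin n1) ℝ) 0 0 R) =
      Matrix.fromBlocks 1 0 0 (cmap R) := by
  ext (i | i) (j | j) <;> simp [cmap, Matrix.fromBlocks, Matrix.one_apply, apply_ite]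

lemma cmap_blocks_A1 {n1 n2 : ℕ} (A1 : Matrix (Fin n1) (Fin n1) ℝ) :
    cmap (Matrix.fromBlocks A1 0 0 (1 : Matrix (Fin n2) (Fin n2) ℝ)) =
      Matrix.fromBlocks (cmap A1) 0 0 1 := by
  ext (i | i) (j | j) <;> simp [cmap, Matrix.fromBlocks, Matrix.one_apply, apply_ite]

lemma cmap_fromColumns {p n1 n2 : ℕ} (C1 : Matrix (Fin p) (Fin n1) ℝ)
    (C2 : Matrix (Fin p) (Fin n2) ℝ) :
    cmap (Matrix.fromCols C1 C2) = Matrix.fromCols (cmap C1) (cmap C2) := by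
  ext i (j | j) <;> simp [cmap, Matrix.fromCols]

lemma cmap_submatrix {a b c d : Type} (M : Matrix a b ℝ) (f : c → a) (g : d → b) :
    cmap (M.submatrix f g) = (cmap M).submatrix f g := rfl

end DD

set_option maxHeartbeats 1600000 in
set_option synthInstance.maxHeartbeats 400000 in
theorem stmt_4 (n1 n2 s m p T : ℕ) (hs : 1 ≤ s) (hT : 1 ≤ T)
    (E A : Matrix (Fin (n1 + n2)) (Fin (n1 + n2)) ℝ)
    (B : Matrix (Fin (n1 + n2)) (Fin m) ℝ)
    (C : Matrix (Fin p) (Fin (n1 + n2)) ℝ)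
    (S P : Matrix (Fin (n1 + n2)) (Fin (n1 + n2)) ℝ)
    (hS : IsUnit S) (hP : IsUnit P)
    (A1 : Matrix (Fin n1) (Fin n1) ℝ) (R : Matrix (Fin n2) (Fin n2) ℝ)
    (B1 : Matrix (Fin n1) (Fin m) ℝ) (B2 : Matrix (Fin n2) (Fin m) ℝ)
    (C1 : Matrix (Fin p) (Fin n1) ℝ) (C2 : Matrix (Fin p) (Fin n2) ℝ)
    (hR : R ^ s = 0)
    (hE : (S * E * P).submatrix ⇑finSumFinEquiv ⇑finSumFinEquiv = Matrix.fromBlocks 1 0 0 R)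
    (hA : (S * A * P).submatrix ⇑finSumFinEquiv ⇑finSumFinEquiv = Matrix.fromBlocks A1 0 0 1)
    (hB : (S * B).submatrix ⇑finSumFinEquiv id = Matrix.fromRows B1 B2)
    (hC : (C * P).submatrix id ⇑finSumFinEquiv = Matrix.fromCols C1 C2)
    (ud : ℕ → Fin m → ℝ) (z1d : ℕ → Fin n1 → ℝ) (z2d : ℕ → Fin n2 → ℝ)
    (xd : ℕ → Fin (n1 + n2) → ℝ) (yd : ℕ → Fin p → ℝ)
    (hz1 : ∀ k < T, z1d (k + 1) = A1 *ᵥ z1d k + B1 *ᵥ ud k)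
    (hz2 : ∀ k ≤ T, z2d k = -(∑ j ∈ Finset.range s, ((R ^ j * B2) *ᵥ ud (k + j))))
    (hxd : ∀ k ≤ T, xd k = P *ᵥ (fun i => Sum.elim (z1d k) (z2d k) (finSumFinEquiv.symm i)))
    (hyd : ∀ k ≤ T, yd k = C *ᵥ xd k)
    (hPE : (Matrix.of fun (i : Fin n1 ⊕ (Fin (s + 1) × Fin m)) (k : Fin T) =>
        Sum.elim (z1d (k : ℕ))
          (fun jl => ud ((k : ℕ) + (jl.1 : ℕ)) jl.2) i).rank = n1 + (s + 1) * m)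
    (hEC : (Matrix.fromRows E C).rank = n1 + n2)
    (hdata : ∀ lam : ℂ, 1 ≤ ‖lam‖ →
      (Matrix.fromRows (lam • cmap (histMat T xd 0) - cmap (histMat T xd 1))
        (Matrix.fromRows (cmap (histMat T ud 0))
          (Matrix.fromRows (cmap (histMat T yd 0)) (cmap (histMat T yd 1))))).rank
      = (Matrix.fromRows (cmap (histMat T xd 0))
          (Matrix.fromRows (cmap (histMat T ud 0)) (cmap (histMat T yd 1)))).rank) :
    ∀ lam : ℂ, 1 ≤ ‖lam‖ →
      (Matrix.fromRows (lam • cmap E - cmap A) (cmap C)).rank = n1 + n2 := by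
  intro lam hlam
  classical
  have hSdet : IsUnit S.det := (Matrix.isUnit_iff_isUnit_det S).mp hS
  have hPdet : IsUnit P.det := (Matrix.isUnit_iff_isUnit_det P).mp hP
  -- real dynamics
  have hdyn : ∀ k < T, E *ᵥ xd (k + 1) = A *ᵥ xd k + B *ᵥ ud k := by
    intro k hk
    have hk1 : k + 1 ≤ T := hk
    have hk0 : k ≤ T := le_of_lt hk
    -- fast subsystem step
    have hfast : R *ᵥ z2d (k + 1) = z2d k + B2 *ᵥ ud k := by
      obtain ⟨t, rfl⟩ : ∃ t, s = t + 1 := ⟨s - 1, by omega⟩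
      rw [hz2 (k + 1) hk1, hz2 k hk0]
      rw [Matrix.mulVec_neg, show R *ᵥ (∑ j ∈ Finset.range (t + 1), (R ^ j * B2) *ᵥ ud (k + 1 + j))
        = ∑ j ∈ Finset.range (t + 1), R *ᵥ ((R ^ j * B2) *ᵥ ud (k + 1 + j)) from
        map_sum R.mulVecLin _ _]
      rw [Finset.sum_range_succ (fun j => R *ᵥ ((R ^ j * B2) *ᵥ ud (k + 1 + j))) t,
        Finset.sum_range_succ' (fun j => (R ^ j * B2) *ᵥ ud (k + j)) t]
      have hlast : R *ᵥ ((R ^ t * B2) *ᵥ ud (k + 1 + t)) = 0 := by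
        rw [Matrix.mulVec_mulVec, ← Matrix.mul_assoc, ← pow_succ', hR, Matrix.zero_mul,
          Matrix.zero_mulVec]
      rw [hlast, add_zero]
      have h0 : (R ^ 0 * B2) *ᵥ ud (k + 0) = B2 *ᵥ ud k := by simp
      rw [h0, neg_add, neg_add_cancel_right]
      congr 1
      refine Finset.sum_congr rfl fun j hj => ?_
      rw [Matrix.mulVec_mulVec, ← Matrix.mul_assoc, ← pow_succ']
      have hkj : k + 1 + j = k + (j + 1) := by omega
      rw [hkj]
    -- multiply out through S and the Weierstrass form
    have hSE : S *ᵥ (E *ᵥ xd (k + 1)) =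
        fun i => (Matrix.fromBlocks 1 0 0 R *ᵥ
          Sum.elim (z1d (k + 1)) (z2d (k + 1)) ) (finSumFinEquiv.symm i) := by
      rw [hxd (k + 1) hk1, Matrix.mulVec_mulVec, Matrix.mulVec_mulVec]
      exact DD.submatrix_rows_mulVec (S * E * P) _ hE _
    have hSA : S *ᵥ (A *ᵥ xd k) =
        fun i => (Matrix.fromBlocks A1 0 0 1 *ᵥ
          Sum.elim (z1d k) (z2d k)) (finSumFinEquiv.symm i) := by
      rw [hxd k hk0, Matrix.mulVec_mulVec, Matrix.mulVec_mulVec]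
      exact DD.submatrix_rows_mulVec (S * A * P) _ hA _
    have hSB : S *ᵥ (B *ᵥ ud k) =
        fun i => (Matrix.fromRows B1 B2 *ᵥ ud k) (finSumFinEquiv.symm i) := by
      rw [Matrix.mulVec_mulVec]
      funext i
      rw [← hB]
      simp [Matrix.mulVec, dotProduct, Matrix.submatrix_apply]
    have key : S *ᵥ (E *ᵥ xd (k + 1)) = S *ᵥ (A *ᵥ xd k + B *ᵥ ud k) := by
      rw [Matrix.mulVec_add, hSE, hSA, hSB]
      funext i
      cases h : finSumFinEquiv.symm i <;>
        simp [h, Matrix.fromBlocks_mulVec, hz1 k hk, hfast, add_comm]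
    have := congrArg (fun v => S⁻¹ *ᵥ v) key
    simpa [Matrix.mulVec_mulVec, ← Matrix.mul_assoc, Matrix.nonsing_inv_mul S hSdet] using this
  -- complexified dynamics of linear combinations
  have hcdyn : ∀ g : Fin T → ℂ,
      cmap E *ᵥ DD.comb T xd 1 g =
        cmap A *ᵥ DD.comb T xd 0 g + cmap B *ᵥ DD.comb T ud 0 g := by
    intro g
    calc cmap E *ᵥ DD.comb T xd 1 g
        = DD.comb T (fun k => E *ᵥ xd k) 1 g := (DD.comb_mulVec T E xd 1 g).symm
      _ = DD.comb T (fun k => A *ᵥ xd k + B *ᵥ ud k) 0 g := by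
          refine DD.comb_congr' T _ _ 1 0 g fun k hk => ?_
          simpa using hdyn k hk
      _ = DD.comb T (fun k => A *ᵥ xd k) 0 g + DD.comb T (fun k => B *ᵥ ud k) 0 g :=
          DD.comb_add T _ _ 0 g
      _ = cmap A *ᵥ DD.comb T xd 0 g + cmap B *ᵥ DD.comb T ud 0 g := by
          rw [DD.comb_mulVec, DD.comb_mulVec]
  have hcY : ∀ g : Fin T → ℂ, ∀ off ≤ 1,
      DD.comb T yd off g = cmap C *ᵥ DD.comb T xd off g := by
    intro g off hoff
    calc DD.comb T yd off g = DD.comb T (fun k => C *ᵥ xd k) off g := by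
          refine DD.comb_congr' T _ _ off off g fun k hk => ?_
          exact hyd (k + off) (by omega)
      _ = cmap C *ᵥ DD.comb T xd off g := DD.comb_mulVec T C xd off g
  have hcX : ∀ g : Fin T → ℂ, ∀ off ≤ 1,
      DD.comb T xd off g = cmap P *ᵥ (fun i =>
        Sum.elim (DD.comb T z1d off g) (DD.comb T z2d off g) (finSumFinEquiv.symm i)) := by
    intro g off hoff
    calc DD.comb T xd off g
        = DD.comb T (fun k => P *ᵥ fun i => Sum.elim (z1d k) (z2d k) (finSumFinEquiv.symm i))
            off g := by
          refine DD.comb_congr' T _ _ off off g fun k hk => ?_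
          exact hxd (k + off) (by omega)
      _ = cmap P *ᵥ DD.comb T
            (fun k i => Sum.elim (z1d k) (z2d k) (finSumFinEquiv.symm i)) off g :=
          DD.comb_mulVec T P _ off g
      _ = _ := by rw [DD.comb_elim]
  have hcZ2 : ∀ g : Fin T → ℂ, ∀ off ≤ 1,
      DD.comb T z2d off g =
        -∑ j ∈ Finset.range s, cmap (R ^ j * B2) *ᵥ DD.comb T ud (off + j) g := by
    intro g off hoff
    calc DD.comb T z2d off g
        = DD.comb T (fun k => -(∑ j ∈ Finset.range s, ((R ^ j * B2) *ᵥ ud (k + j)))) off g := by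
          refine DD.comb_congr' T _ _ off off g fun k hk => ?_
          exact hz2 (k + off) (by omega)
      _ = -DD.comb T (fun k => ∑ j ∈ Finset.range s, ((R ^ j * B2) *ᵥ ud (k + j))) off g :=
          DD.comb_neg T _ off g
      _ = -∑ j ∈ Finset.range s, DD.comb T (fun k => (R ^ j * B2) *ᵥ ud (k + j)) off g := by
          rw [DD.comb_sum]
      _ = -∑ j ∈ Finset.range s, cmap (R ^ j * B2) *ᵥ DD.comb T ud (off + j) g := by
          congr 1
          refine Finset.sum_congr rfl fun j _ => ?_
          calc DD.comb T (fun k => (R ^ j * B2) *ᵥ ud (k + j)) off g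
              = DD.comb T (fun k => (R ^ j * B2) *ᵥ ud k) (off + j) g := by
                refine DD.comb_congr' T _ _ off (off + j) g fun k hk => ?_
                rw [add_assoc]
            _ = cmap (R ^ j * B2) *ᵥ DD.comb T ud (off + j) g := DD.comb_mulVec T _ ud _ g
  have hcZ1 : ∀ g : Fin T → ℂ,
      DD.comb T z1d 1 g = cmap A1 *ᵥ DD.comb T z1d 0 g + cmap B1 *ᵥ DD.comb T ud 0 g := by
    intro g
    calc DD.comb T z1d 1 g
        = DD.comb T (fun k => A1 *ᵥ z1d k + B1 *ᵥ ud k) 0 g := by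
          refine DD.comb_congr' T _ _ 1 0 g fun k hk => ?_
          simpa using hz1 k hk
      _ = DD.comb T (fun k => A1 *ᵥ z1d k) 0 g + DD.comb T (fun k => B1 *ᵥ ud k) 0 g :=
          DD.comb_add T _ _ 0 g
      _ = cmap A1 *ᵥ DD.comb T z1d 0 g + cmap B1 *ᵥ DD.comb T ud 0 g := by
          rw [DD.comb_mulVec, DD.comb_mulVec]
  -- injectivity of col(E, C) over the complexes
  have hInj : ∀ v : Fin (n1 + n2) → ℂ, cmap E *ᵥ v = 0 → cmap C *ᵥ v = 0 → v = 0 := by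
    have hker := DD.ker_eq_bot_of_rank (Matrix.fromRows E C) (by rw [hEC]; simp)
    intro v hEv hCv
    have hparts : ∀ u : Fin (n1 + n2) → ℝ,
        E *ᵥ u = 0 → C *ᵥ u = 0 → u = 0 := by
      intro u h1 h2
      have hmem : u ∈ LinearMap.ker (Matrix.fromRows E C).mulVecLin := by
        rw [LinearMap.mem_ker, Matrix.mulVecLin_apply, Matrix.fromRows_mulVec, h1, h2]
        ext (i | i) <;> rfl
      rw [hker, Submodule.mem_bot] at hmem
      exact hmem
    have hre : (fun j => (v j).re) = 0 := by
      refine hparts _ ?_ ?_ <;> ext i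
      · rw [← DD.cmap_mulVec_re E v i, hEv]; rfl
      · rw [← DD.cmap_mulVec_re C v i, hCv]; rfl
    have him : (fun j => (v j).im) = 0 := by
      refine hparts _ ?_ ?_ <;> ext i
      · rw [← DD.cmap_mulVec_im E v i, hEv]; rfl
      · rw [← DD.cmap_mulVec_im C v i, hCv]; rfl
    ext i
    rw [Complex.ext_iff]
    exact ⟨(congrFun hre i).trans rfl, (congrFun him i).trans rfl⟩
  -- persistent excitation: complex surjectivity
  set Z : Matrix (Fin n1 ⊕ (Fin (s + 1) × Fin m)) (Fin T) ℝ :=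
    Matrix.of fun i k => Sum.elim (z1d (k : ℕ))
      (fun jl => ud ((k : ℕ) + (jl.1 : ℕ)) jl.2) i with hZdef
  have hPEc : ∀ w : (Fin n1 ⊕ (Fin (s + 1) × Fin m)) → ℂ,
      ∃ g : Fin T → ℂ, cmap Z *ᵥ g = w := by
    have htop := DD.range_eq_top_of_rank Z (by
      rw [hPE]; simp [Fintype.card_sum, Fintype.card_prod])
    have hsurj : ∀ u : (Fin n1 ⊕ (Fin (s + 1) × Fin m)) → ℝ, ∃ gr, Z *ᵥ gr = u := by
      intro u
      have : u ∈ LinearMap.range Z.mulVecLin := htop ▸ Submodule.mem_top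
      obtain ⟨gr, hgr⟩ := this
      exact ⟨gr, by rwa [Matrix.mulVecLin_apply] at hgr⟩
    intro w
    obtain ⟨gr, hgr⟩ := hsurj fun i => (w i).re
    obtain ⟨gi, hgi⟩ := hsurj fun i => (w i).im
    refine ⟨(fun k => (gr k : ℂ)) + Complex.I • (fun k => (gi k : ℂ)), ?_⟩
    rw [Matrix.mulVec_add, Matrix.mulVec_smul, DD.cmap_mulVec_ofReal, DD.cmap_mulVec_ofReal,
      hgr, hgi]
    ext i
    simp only [Pi.add_apply, Pi.smul_apply, smul_eq_mul]
    rw [mul_comm, Complex.re_add_im]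
  -- data matrices and kernels
  set Xp := cmap (histMat T xd 0) with hXpdef
  set Xf := cmap (histMat T xd 1) with hXfdef
  set Up := cmap (histMat T ud 0) with hUpdef
  set Yp := cmap (histMat T yd 0) with hYpdef
  set Yf := cmap (histMat T yd 1) with hYfdef
  have hXpg : ∀ g, Xp *ᵥ g = DD.comb T xd 0 g := fun g => DD.cmap_histMat_mulVec T xd 0 g
  have hXfg : ∀ g, Xf *ᵥ g = DD.comb T xd 1 g := fun g => DD.cmap_histMat_mulVec T xd 1 g
  have hUpg : ∀ g, Up *ᵥ g = DD.comb T ud 0 g := fun g => DD.cmap_histMat_mulVec T ud 0 g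
  have hYpg : ∀ g, Yp *ᵥ g = DD.comb T yd 0 g := fun g => DD.cmap_histMat_mulVec T yd 0 g
  have hYfg : ∀ g, Yf *ᵥ g = DD.comb T yd 1 g := fun g => DD.cmap_histMat_mulVec T yd 1 g
  set Mbig := Matrix.fromRows (lam • Xp - Xf) (Matrix.fromRows Up (Matrix.fromRows Yp Yf))
    with hMbigdef
  set Msmall := Matrix.fromRows Xp (Matrix.fromRows Up Yf) with hMsmalldef
  set Mlam := Matrix.fromRows (lam • cmap E - cmap A) (cmap C) with hMlamdef
  have hKbMem : ∀ g : Fin T → ℂ, Mbig *ᵥ g = 0 ↔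
      (lam • DD.comb T xd 0 g - DD.comb T xd 1 g = 0 ∧ DD.comb T ud 0 g = 0 ∧
        DD.comb T yd 0 g = 0 ∧ DD.comb T yd 1 g = 0) := by
    intro g
    rw [hMbigdef, Matrix.fromRows_mulVec, Matrix.fromRows_mulVec, Matrix.fromRows_mulVec,
      DD.sum_elim_eq_zero, DD.sum_elim_eq_zero, DD.sum_elim_eq_zero,
      Matrix.sub_mulVec, Matrix.smul_mulVec, hXpg, hXfg, hUpg, hYpg, hYfg]
  have hKsMem : ∀ g : Fin T → ℂ, Msmall *ᵥ g = 0 ↔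
      (DD.comb T xd 0 g = 0 ∧ DD.comb T ud 0 g = 0 ∧ DD.comb T yd 1 g = 0) := by
    intro g
    rw [hMsmalldef, Matrix.fromRows_mulVec, Matrix.fromRows_mulVec,
      DD.sum_elim_eq_zero, DD.sum_elim_eq_zero, hXpg, hUpg, hYfg]
  have hNMem : ∀ w : Fin (n1 + n2) → ℂ, Mlam *ᵥ w = 0 ↔
      (lam • (cmap E *ᵥ w) - cmap A *ᵥ w = 0 ∧ cmap C *ᵥ w = 0) := by
    intro w
    rw [hMlamdef, Matrix.fromRows_mulVec, DD.sum_elim_eq_zero,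
      Matrix.sub_mulVec, Matrix.smul_mulVec]
  set Kb := LinearMap.ker Mbig.mulVecLin with hKbdef
  set Ks := LinearMap.ker Msmall.mulVecLin with hKsdef
  set N := LinearMap.ker Mlam.mulVecLin with hNdef
  -- Ks ≤ Kb
  have hKsKb : Ks ≤ Kb := by
    intro g hg
    rw [hKsdef, LinearMap.mem_ker, Matrix.mulVecLin_apply, hKsMem] at hg
    obtain ⟨h1, h2, h3⟩ := hg
    have hXf0 : DD.comb T xd 1 g = 0 := by
      apply hInj
      · rw [hcdyn g, h1, h2, Matrix.mulVec_zero, Matrix.mulVec_zero, add_zero]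
      · rw [← hcY g 1 le_rfl, h3]
    rw [hKbdef, LinearMap.mem_ker, Matrix.mulVecLin_apply, hKbMem]
    refine ⟨by rw [h1, hXf0, smul_zero, sub_zero], h2, ?_, h3⟩
    rw [hcY g 0 (by omega), h1, Matrix.mulVec_zero]
  -- the comparison map
  set φ : Kb →ₗ[ℂ] (Fin (n1 + n2) → ℂ) := Xp.mulVecLin.comp Kb.subtype with hφdef
  have hφapply : ∀ g : Kb, φ g = DD.comb T xd 0 (g : Fin T → ℂ) := by
    rintro ⟨g, hg⟩
    rw [hφdef]
    simp only [LinearMap.comp_apply, Submodule.subtype_apply, Matrix.mulVecLin_apply]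
    exact hXpg g
  have hrange : LinearMap.range φ = N := by
    apply le_antisymm
    · rintro _ ⟨⟨g, hg⟩, rfl⟩
      rw [hφapply ⟨g, hg⟩]
      have hg' := hg
      rw [hKbdef, LinearMap.mem_ker, Matrix.mulVecLin_apply, hKbMem] at hg'
      obtain ⟨h1, h2, h3, h4⟩ := hg'
      rw [hNdef, LinearMap.mem_ker, Matrix.mulVecLin_apply, hNMem]
      have hc1 : DD.comb T xd 1 g = lam • DD.comb T xd 0 g := (sub_eq_zero.mp h1).symm
      constructor
      · rw [sub_eq_zero]
        have hd := hcdyn g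
        rw [h2, Matrix.mulVec_zero, add_zero, hc1, Matrix.mulVec_smul] at hd
        exact hd
      · rw [← hcY g 0 (by omega), h3]
    · intro w hw
      rw [hNdef, LinearMap.mem_ker, Matrix.mulVecLin_apply, hNMem] at hw
      obtain ⟨hwE, hwC⟩ := hw
      set Pci := cmap P⁻¹ with hPcidef
      have hPPc : cmap P * Pci = 1 := by
        rw [hPcidef, ← DD.cmap_mul, Matrix.mul_nonsing_inv P hPdet, DD.cmap_one]
      set w12 : Fin n1 ⊕ Fin n2 → ℂ := fun a => (Pci *ᵥ w) (finSumFinEquiv a) with hw12def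
      set w1 : Fin n1 → ℂ := w12 ∘ Sum.inl with hw1def
      set w2 : Fin n2 → ℂ := w12 ∘ Sum.inr with hw2def
      have htot : w = cmap P *ᵥ (fun i => w12 (finSumFinEquiv.symm i)) := by
        have h1 : (fun i => w12 (finSumFinEquiv.symm i)) = Pci *ᵥ w := by
          funext i; rw [hw12def]; simp
        rw [h1, Matrix.mulVec_mulVec, hPPc, Matrix.one_mulVec]
      have hSEw : cmap S *ᵥ (cmap E *ᵥ w) =
          fun i => (Matrix.fromBlocks 1 0 0 (cmap R) *ᵥ w12) (finSumFinEquiv.symm i) := by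
        conv_lhs => rw [htot]
        rw [Matrix.mulVec_mulVec, Matrix.mulVec_mulVec, ← DD.cmap_mul, ← DD.cmap_mul]
        refine DD.submatrix_rows_mulVec (cmap (S * E * P)) _ ?_ w12
        rw [← DD.cmap_submatrix, hE, DD.cmap_blocks_1R]
      have hSAw : cmap S *ᵥ (cmap A *ᵥ w) =
          fun i => (Matrix.fromBlocks (cmap A1) 0 0 1 *ᵥ w12) (finSumFinEquiv.symm i) := by
        conv_lhs => rw [htot]
        rw [Matrix.mulVec_mulVec, Matrix.mulVec_mulVec, ← DD.cmap_mul, ← DD.cmap_mul]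
        refine DD.submatrix_rows_mulVec (cmap (S * A * P)) _ ?_ w12
        rw [← DD.cmap_submatrix, hA, DD.cmap_blocks_A1]
      have hcomb : ∀ a, lam • (Matrix.fromBlocks 1 0 0 (cmap R) *ᵥ w12) a
          - (Matrix.fromBlocks (cmap A1) 0 0 1 *ᵥ w12) a = 0 := by
        intro a
        have h1 : lam • (cmap S *ᵥ (cmap E *ᵥ w)) - cmap S *ᵥ (cmap A *ᵥ w) = 0 := by
          rw [← Matrix.mulVec_smul, ← Matrix.mulVec_sub, hwE, Matrix.mulVec_zero]
        rw [hSEw, hSAw] at h1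
        have h2 := congrFun h1 (finSumFinEquiv a)
        simpa using h2
      have hw2z : w2 = 0 := by
        apply DD.nilpotent_fixed_zero (cmap R) s (by rw [← DD.cmap_pow, hR, DD.cmap_zero]) lam
        funext b
        have h := hcomb (Sum.inr b)
        rw [sub_eq_zero] at h
        rw [Matrix.fromBlocks_mulVec, Matrix.fromBlocks_mulVec] at h
        simp only [Sum.elim_inr, Matrix.zero_mulVec, Matrix.one_mulVec, zero_add,
          Pi.add_apply, Pi.zero_apply, Pi.smul_apply] at h
        rw [hw2def]
        exact h.symm
      have hA1w : cmap A1 *ᵥ w1 = lam • w1 := by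
        funext b
        have h := hcomb (Sum.inl b)
        rw [sub_eq_zero] at h
        rw [Matrix.fromBlocks_mulVec, Matrix.fromBlocks_mulVec] at h
        simp only [Sum.elim_inl, Matrix.zero_mulVec, Matrix.one_mulVec, add_zero,
          Pi.add_apply, Pi.zero_apply, Pi.smul_apply] at h
        rw [hw1def]
        exact h.symm
      have hC1w : cmap C1 *ᵥ w1 = 0 := by
        have hCw : cmap C *ᵥ w = Matrix.fromCols (cmap C1) (cmap C2) *ᵥ w12 := by
          conv_lhs => rw [htot]
          rw [Matrix.mulVec_mulVec, ← DD.cmap_mul]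
          refine DD.submatrix_cols_mulVec (cmap (C * P)) _ ?_ w12
          rw [← DD.cmap_submatrix, hC, DD.cmap_fromColumns]
        rw [hwC, ← Sum.elim_comp_inl_inr w12, Matrix.fromCols_mulVec_sumElim] at hCw
        rw [← hw1def, ← hw2def, hw2z, Matrix.mulVec_zero, add_zero] at hCw
        exact hCw.symm
      obtain ⟨g, hg⟩ := hPEc (Sum.elim w1 0)
      have hg1 : DD.comb T z1d 0 g = w1 := by
        funext i
        have h := congrFun hg (Sum.inl i)
        simpa [hZdef, cmap, Matrix.mulVec, dotProduct, DD.comb, mul_comm] using h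
      have hgU : ∀ j : ℕ, j ≤ s → DD.comb T ud j g = 0 := by
        intro j hj
        funext l
        have h := congrFun hg (Sum.inr (⟨j, by omega⟩, l))
        simpa [hZdef, cmap, Matrix.mulVec, dotProduct, DD.comb, mul_comm] using h
      have hz2g0 : DD.comb T z2d 0 g = 0 := by
        rw [hcZ2 g 0 (by omega)]
        rw [Finset.sum_eq_zero, neg_zero]
        intro j hj
        rw [hgU (0 + j) (by have := Finset.mem_range.mp hj; omega), Matrix.mulVec_zero]
      have hz2g1 : DD.comb T z2d 1 g = 0 := by
        rw [hcZ2 g 1 le_rfl]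
        rw [Finset.sum_eq_zero, neg_zero]
        intro j hj
        rw [hgU (1 + j) (by have := Finset.mem_range.mp hj; omega), Matrix.mulVec_zero]
      have hz1g1 : DD.comb T z1d 1 g = lam • w1 := by
        rw [hcZ1 g, hg1, hgU 0 (by omega), Matrix.mulVec_zero, add_zero, hA1w]
      have hPe0 : cmap P *ᵥ (fun i =>
          Sum.elim w1 (0 : Fin n2 → ℂ) (finSumFinEquiv.symm i)) = w := by
        have hv : (fun i => Sum.elim w1 (0 : Fin n2 → ℂ) (finSumFinEquiv.symm i))
            = fun i => w12 (finSumFinEquiv.symm i) := by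
          funext i
          cases h : finSumFinEquiv.symm i with
          | inl a => rw [Sum.elim_inl, hw1def]; rfl
          | inr a =>
            rw [Sum.elim_inr]
            exact (congrFun hw2z a).symm
        rw [hv, ← htot]
      have hx0 : DD.comb T xd 0 g = w := by
        rw [hcX g 0 (by omega), hg1, hz2g0, hPe0]
      have hx1 : DD.comb T xd 1 g = lam • w := by
        rw [hcX g 1 le_rfl, hz1g1, hz2g1]
        have hsc : (fun i => Sum.elim (lam • w1) (0 : Fin n2 → ℂ) (finSumFinEquiv.symm i))
            = lam • fun i => Sum.elim w1 (0 : Fin n2 → ℂ) (finSumFinEquiv.symm i) := by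
          funext i; cases h : finSumFinEquiv.symm i <;> simp [h]
        rw [hsc, Matrix.mulVec_smul, hPe0]
      have hy0 : DD.comb T yd 0 g = 0 := by
        rw [hcY g 0 (by omega), hx0, hwC]
      have hy1 : DD.comb T yd 1 g = 0 := by
        rw [hcY g 1 le_rfl, hx1, Matrix.mulVec_smul, hwC, smul_zero]
      have hgKb : g ∈ Kb := by
        rw [hKbdef, LinearMap.mem_ker, Matrix.mulVecLin_apply, hKbMem]
        exact ⟨by rw [hx0, hx1, sub_self], hgU 0 (by omega), hy0, hy1⟩
      exact ⟨⟨g, hgKb⟩, (hφapply ⟨g, hgKb⟩).trans hx0⟩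
  have hkerφ : LinearMap.ker φ = Submodule.comap Kb.subtype Ks := by
    ext ⟨g, hg⟩
    have hg' := hg
    rw [hKbdef, LinearMap.mem_ker, Matrix.mulVecLin_apply, hKbMem] at hg'
    obtain ⟨h1, h2, h3, h4⟩ := hg'
    rw [LinearMap.mem_ker, hφapply ⟨g, hg⟩, Submodule.mem_comap, Submodule.subtype_apply]
    rw [hKsdef, LinearMap.mem_ker, Matrix.mulVecLin_apply, hKsMem]
    constructor
    · intro h; exact ⟨h, h2, h4⟩
    · rintro ⟨h, -, -⟩; exact h
  -- dimension counting
  have hd1 : Module.finrank ℂ (LinearMap.range φ) + Module.finrank ℂ (LinearMap.ker φ)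
      = Module.finrank ℂ Kb := LinearMap.finrank_range_add_finrank_ker φ
  have hd2 : Mbig.rank + Module.finrank ℂ Kb = T := by
    have h := LinearMap.finrank_range_add_finrank_ker Mbig.mulVecLin
    rw [Module.finrank_pi, Fintype.card_fin] at h
    rw [Matrix.rank, hKbdef]
    exact h
  have hd3 : Msmall.rank + Module.finrank ℂ Ks = T := by
    have h := LinearMap.finrank_range_add_finrank_ker Msmall.mulVecLin
    rw [Module.finrank_pi, Fintype.card_fin] at h
    rw [Matrix.rank, hKsdef]
    exact h
  have hdr := hdata lam hlam
  rw [← hMbigdef] at hdr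
  have hkerφ_rank : Module.finrank ℂ (LinearMap.ker φ) = Module.finrank ℂ Ks := by
    rw [hkerφ]
    exact (Submodule.comapSubtypeEquivOfLe hKsKb).finrank_eq
  have hrange_rank : Module.finrank ℂ (LinearMap.range φ) = Module.finrank ℂ N := by
    rw [hrange]
  have hN0 : Module.finrank ℂ N = 0 := by omega
  have hN : N = ⊥ := Submodule.finrank_eq_zero.mp hN0
  have hfin := LinearMap.finrank_range_add_finrank_ker Mlam.mulVecLin
  rw [Module.finrank_pi, Fintype.card_fin, ← hNdef, hN, finrank_bot] at hfin
  rw [Matrix.rank]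
  omega
end
end

section
/- Assume the Weierstrass decomposition, historical data, and persistent excitation hypotheses, and set Q = [B2, R·B2, …, R^{s−1}·B2] ∈ ℝ^{n2×(s·m)}. Then rank col(X_p, U_p, Y_f) = n1 + m + rank( col(R, C2) · Q ), where col(R, C2) ∈ ℝ^{(n2+p)×n2} is the vertical stacking of R and C2. -/
open Matrix

open Module

noncomputable section

lemma myrank_submatrix_equiv {m n m' n' : Type*} [Fintype n] [Fintype n'] (A : Matrix m n ℝ)
    (e₁ : m' ≃ m) (e₂ : n' ≃ n) : (A.submatrix e₁ e₂).rank = A.rank := by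
  have : A.submatrix ⇑e₁ ⇑e₂ = reindex e₁.symm e₂.symm A := by
    simp [reindex_apply]
  rw [this, Matrix.rank, Matrix.rank, mulVecLin_reindex, LinearMap.range_comp,
    LinearMap.range_comp, LinearEquiv.range, Submodule.map_top, LinearEquiv.finrank_map_eq]

lemma myrank_mul_full_row_rank {a b c : Type*} [Fintype a] [Fintype b] [Fintype c]
    (M : Matrix a b ℝ) (W : Matrix b c ℝ) (h : W.rank = Fintype.card b) :
    (M * W).rank = M.rank := by
  have hsurj : Function.Surjective W.mulVecLin := by
    rw [← LinearMap.range_eq_top]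
    apply Submodule.eq_top_of_finrank_eq
    rw [← Matrix.rank, h, finrank_pi]
  rw [Matrix.rank, Matrix.rank, Matrix.mulVecLin_mul,
    LinearMap.range_comp_of_range_eq_top _ (LinearMap.range_eq_top.mpr hsurj)]

lemma myfinrank_submodule_prod {M N : Type*} [AddCommGroup M] [AddCommGroup N]
    [Module ℝ M] [Module ℝ N] [FiniteDimensional ℝ M] [FiniteDimensional ℝ N]
    (p : Submodule ℝ M) (q : Submodule ℝ N) :
    finrank ℝ (p.prod q) = finrank ℝ p + finrank ℝ q := by
  have e : (p.prod q) ≃ₗ[ℝ] p × q :=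
    { toFun := fun x => (⟨x.1.1, x.2.1⟩, ⟨x.1.2, x.2.2⟩)
      invFun := fun y => ⟨(y.1.1, y.2.1), ⟨y.1.2, y.2.2⟩⟩
      map_add' := fun x y => rfl
      map_smul' := fun c x => rfl
      left_inv := fun x => rfl
      right_inv := fun y => rfl }
  rw [e.finrank_eq, finrank_prod]

lemma myrank_fromBlocks_diag {a b c d : Type*} [Fintype a] [Fintype b] [Fintype c] [Fintype d]
    (A : Matrix c a ℝ) (D : Matrix d b ℝ) :
    (fromBlocks A 0 0 D).rank = A.rank + D.rank := by
  classical
  set f := (fromBlocks A 0 0 D).mulVecLin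
  let eL : ((c ⊕ d) → ℝ) ≃ₗ[ℝ] (c → ℝ) × (d → ℝ) := LinearEquiv.sumArrowLequivProdArrow c d ℝ ℝ
  have hmap : Submodule.map (eL : ((c ⊕ d) → ℝ) →ₗ[ℝ] (c → ℝ) × (d → ℝ)) (LinearMap.range f)
      = (LinearMap.range A.mulVecLin).prod (LinearMap.range D.mulVecLin) := by
    ext yz
    constructor
    · rintro ⟨y, ⟨x, rfl⟩, rfl⟩
      refine ⟨⟨x ∘ Sum.inl, ?_⟩, ⟨x ∘ Sum.inr, ?_⟩⟩ <;>
      · show _ = _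
        funext i
        simp [f, eL, Matrix.mulVecLin_apply, fromBlocks_mulVec, LinearEquiv.sumArrowLequivProdArrow]
    · rintro ⟨⟨u, hu⟩, ⟨v, hv⟩⟩
      refine ⟨Sum.elim (A *ᵥ u) (D *ᵥ v), ⟨Sum.elim u v, ?_⟩, ?_⟩
      · show _ = _
        simp [f, Matrix.mulVecLin_apply, fromBlocks_mulVec]
      · apply Prod.ext <;>
          simp [eL, LinearEquiv.sumArrowLequivProdArrow, Equiv.sumArrowEquivProdArrow,
            ← hu, ← hv, Matrix.mulVecLin_apply]
  have h1 : (fromBlocks A 0 0 D).rank = finrank ℝ (LinearMap.range f) := rfl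
  rw [h1, ← LinearEquiv.finrank_map_eq eL, hmap, myfinrank_submodule_prod]
  rfl

def shiftEquiv' (n1 s m : ℕ) : ((Fin n1 ⊕ Fin m) ⊕ Fin s × Fin m) ≃ (Fin n1 ⊕ Fin (s+1) × Fin m) where
  toFun x := match x with
    | .inl (.inl i) => .inl i
    | .inl (.inr l) => .inr (0, l)
    | .inr (j, l) => .inr (j.succ, l)
  invFun x := match x with
    | .inl i => .inl (.inl i)
    | .inr (j, l) => Fin.cases (Sum.inl (Sum.inr l)) (fun j' => Sum.inr (j', l)) j
  left_inv := by rintro ((i|l)|⟨j,l⟩) <;> simp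
  right_inv := by
    rintro (i|⟨j,l⟩)
    · rfl
    · induction j using Fin.cases <;> simp

def rowEquiv' (a b c d : Type) : ((a ⊕ b) ⊕ (c ⊕ d)) ≃ ((a ⊕ c) ⊕ (b ⊕ d)) where
  toFun x := match x with
    | .inl (.inl i) => .inl (.inl i)
    | .inl (.inr i) => .inr (.inl i)
    | .inr (.inl i) => .inl (.inr i)
    | .inr (.inr i) => .inr (.inr i)
  invFun x := match x with
    | .inl (.inl i) => .inl (.inl i)
    | .inl (.inr i) => .inr (.inl i)
    | .inr (.inl i) => .inl (.inr i)
    | .inr (.inr i) => .inr (.inr i)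
  left_inv := by rintro ((i|i)|(i|i)) <;> rfl
  right_inv := by rintro ((i|i)|(i|i)) <;> rfl

theorem stmt_5 (n1 n2 s m p T : ℕ) (hs : 1 ≤ s) (hT : 1 ≤ T)
    (E A : Matrix (Fin (n1 + n2)) (Fin (n1 + n2)) ℝ)
    (B : Matrix (Fin (n1 + n2)) (Fin m) ℝ)
    (C : Matrix (Fin p) (Fin (n1 + n2)) ℝ)
    (S P : Matrix (Fin (n1 + n2)) (Fin (n1 + n2)) ℝ)
    (hS : IsUnit S) (hP : IsUnit P)
    (A1 : Matrix (Fin n1) (Fin n1) ℝ) (R : Matrix (Fin n2) (Fin n2) ℝ)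
    (B1 : Matrix (Fin n1) (Fin m) ℝ) (B2 : Matrix (Fin n2) (Fin m) ℝ)
    (C1 : Matrix (Fin p) (Fin n1) ℝ) (C2 : Matrix (Fin p) (Fin n2) ℝ)
    (hR : R ^ s = 0)
    (hE : (S * E * P).submatrix ⇑finSumFinEquiv ⇑finSumFinEquiv = Matrix.fromBlocks 1 0 0 R)
    (hA : (S * A * P).submatrix ⇑finSumFinEquiv ⇑finSumFinEquiv = Matrix.fromBlocks A1 0 0 1)
    (hB : (S * B).submatrix ⇑finSumFinEquiv id = Matrix.fromRows B1 B2)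
    (hC : (C * P).submatrix id ⇑finSumFinEquiv = Matrix.fromCols C1 C2)
    (ud : ℕ → Fin m → ℝ) (z1d : ℕ → Fin n1 → ℝ) (z2d : ℕ → Fin n2 → ℝ)
    (xd : ℕ → Fin (n1 + n2) → ℝ) (yd : ℕ → Fin p → ℝ)
    (hz1 : ∀ k < T, z1d (k + 1) = A1 *ᵥ z1d k + B1 *ᵥ ud k)
    (hz2 : ∀ k ≤ T, z2d k = -(∑ j ∈ Finset.range s, ((R ^ j * B2) *ᵥ ud (k + j))))
    (hxd : ∀ k ≤ T, xd k = P *ᵥ (fun i => Sum.elim (z1d k) (z2d k) (finSumFinEquiv.symm i)))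
    (hyd : ∀ k ≤ T, yd k = C *ᵥ xd k)
    (hPE : (Matrix.of fun (i : Fin n1 ⊕ (Fin (s + 1) × Fin m)) (k : Fin T) =>
        Sum.elim (z1d (k : ℕ))
          (fun jl => ud ((k : ℕ) + (jl.1 : ℕ)) jl.2) i).rank = n1 + (s + 1) * m)
    :
    (Matrix.fromRows (histMat T xd 0)
      (Matrix.fromRows (histMat T ud 0) (histMat T yd 1))).rank
    = n1 + m + ((Matrix.fromRows R C2) *
        (Matrix.of fun (i : Fin n2) (jl : Fin s × Fin m) =>
          (R ^ (jl.1 : ℕ) * B2) i jl.2)).rank := by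
  classical
  set W : Matrix (Fin n1 ⊕ (Fin (s + 1) × Fin m)) (Fin T) ℝ :=
    Matrix.of fun i k => Sum.elim (z1d (k : ℕ))
      (fun jl => ud ((k : ℕ) + (jl.1 : ℕ)) jl.2) i with hW
  set D : Matrix (Fin (n1 + n2) ⊕ (Fin m ⊕ Fin p)) (Fin T) ℝ :=
    Matrix.fromRows (histMat T xd 0) (Matrix.fromRows (histMat T ud 0) (histMat T yd 1)) with hD
  set Q : Matrix (Fin n2) (Fin s × Fin m) ℝ :=
    Matrix.of fun i jl => (R ^ (jl.1 : ℕ) * B2) i jl.2 with hQ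
  set V : Matrix ((Fin n1 ⊕ Fin n2) ⊕ (Fin m ⊕ Fin p)) (Fin T) ℝ :=
    Matrix.of fun r k => Sum.elim (Sum.elim (z1d (k : ℕ)) (z2d (k : ℕ)))
      (Sum.elim (ud (k : ℕ)) (yd ((k : ℕ) + 1))) r with hV
  set Pb : Matrix ((Fin n1 ⊕ Fin n2) ⊕ (Fin m ⊕ Fin p)) ((Fin n1 ⊕ Fin n2) ⊕ (Fin m ⊕ Fin p)) ℝ :=
    fromBlocks (P.submatrix ⇑finSumFinEquiv ⇑finSumFinEquiv) 0 0 1 with hPb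
  set M : Matrix ((Fin n1 ⊕ Fin n2) ⊕ (Fin m ⊕ Fin p)) (Fin n1 ⊕ (Fin (s + 1) × Fin m)) ℝ :=
    fromBlocks
      (fromRows 1 0)
      (fromRows 0 (Matrix.of fun i jl =>
        if (jl.1 : ℕ) < s then -((R ^ (jl.1 : ℕ) * B2) i jl.2) else 0))
      (fromRows 0 (C1 * A1))
      (fromRows
        (Matrix.of fun i jl =>
          if (jl.1 : ℕ) = 0 then (1 : Matrix (Fin m) (Fin m) ℝ) i jl.2 else 0)
        (Matrix.of fun i jl =>
          if (jl.1 : ℕ) = 0 then (C1 * B1) i jl.2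
          else -((C2 * R ^ ((jl.1 : ℕ) - 1) * B2) i jl.2))) with hM
  set N : Matrix (Fin n2 ⊕ Fin p) (Fin s × Fin m) ℝ :=
    fromRows
      (Matrix.of fun i jl => -((R ^ ((jl.1 : ℕ) + 1) * B2) i jl.2))
      (Matrix.of fun i jl => -((C2 * R ^ (jl.1 : ℕ) * B2) i jl.2)) with hN
  set X : Matrix (Fin n2 ⊕ Fin p) (Fin n1 ⊕ Fin m) ℝ :=
    fromBlocks 0 (-B2) (C1 * A1) (C1 * B1) with hX
  -- Step A : the reindexed data matrix factors as Pb * V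
  have stepA : D.submatrix ⇑(Equiv.sumCongr finSumFinEquiv (Equiv.refl (Fin m ⊕ Fin p))) ⇑(Equiv.refl (Fin T)) = Pb * V := by
    ext r k
    rcases r with j' | r'
    · have hRhs : (Pb * V) (Sum.inl j') k
          = ∑ j'' : Fin n1 ⊕ Fin n2, P (finSumFinEquiv j') (finSumFinEquiv j'') *
              Sum.elim (z1d (k : ℕ)) (z2d (k : ℕ)) j'' := by
        rw [Matrix.mul_apply, Fintype.sum_sum_type]
        simp [hPb, hV]
      have hLhs : D.submatrix (⇑(Equiv.sumCongr finSumFinEquiv (Equiv.refl (Fin m ⊕ Fin p)))) (⇑(Equiv.refl (Fin T))) (Sum.inl j') k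
          = xd (k : ℕ) (finSumFinEquiv j') := by
        simp [hD, histMat]
      rw [hLhs, hRhs, hxd (k : ℕ) (le_of_lt k.isLt)]
      simp only [Matrix.mulVec, dotProduct]
      exact (Fintype.sum_equiv finSumFinEquiv _ _ (fun x => by simp)).symm
    · have hRhs : (Pb * V) (Sum.inr r') k
          = Sum.elim (ud (k : ℕ)) (yd ((k : ℕ) + 1)) r' := by
        rw [Matrix.mul_apply, Fintype.sum_sum_type]
        simp [hPb, hV, one_apply]
      rw [hRhs]
      rcases r' with l | ip <;> simp [hD, histMat]
  -- Step B : V = M * W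
  have stepB : V = M * W := by
    have hkT : ∀ k : Fin T, (k : ℕ) ≤ T := fun k => le_of_lt k.isLt
    ext r k
    rcases r with (i | i) | (i | i)
    · -- z1 row
      rw [Matrix.mul_apply, Fintype.sum_sum_type]
      simp [hM, hV, hW, one_apply]
    · -- z2 row
      rw [Matrix.mul_apply, Fintype.sum_sum_type, Fintype.sum_prod_type]
      simp only [hM, hV, hW, fromBlocks_apply₁₁, fromBlocks_apply₁₂, fromRows_apply_inr,
        Matrix.of_apply, Matrix.zero_apply, zero_mul, Finset.sum_const_zero, zero_add,
        Sum.elim_inl, Sum.elim_inr]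
      have hinner : ∀ j : Fin (s+1),
          (∑ l, (if (j : ℕ) < s then -((R ^ (j : ℕ) * B2) i l) else 0) * ud ((k : ℕ) + (j : ℕ)) l)
          = (fun jn => if jn < s then -((((R ^ jn * B2)) *ᵥ ud ((k : ℕ) + jn)) i) else 0)
              ((j : ℕ)) := by
        intro j
        by_cases hj : (j : ℕ) < s
        · simp [hj, Matrix.mulVec, dotProduct]
        · simp [hj]
      rw [Finset.sum_congr rfl (fun j _ => hinner j),
        Fin.sum_univ_eq_sum_range
          (fun jn => if jn < s then -(((R ^ jn * B2) *ᵥ ud ((k : ℕ) + jn)) i) else 0) (s+1),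
        Finset.sum_range_succ]
      simp only [lt_irrefl, if_false, add_zero]
      rw [hz2 (k : ℕ) (hkT k)]
      rw [Pi.neg_apply, Finset.sum_apply]
      rw [← Finset.sum_neg_distrib]
      exact Finset.sum_congr rfl fun j hj => by
        rw [if_pos (Finset.mem_range.mp hj)]
    · -- u row
      rw [Matrix.mul_apply, Fintype.sum_sum_type, Fintype.sum_prod_type]
      simp only [hM, hV, hW, fromBlocks_apply₂₁, fromBlocks_apply₂₂, fromRows_apply_inl,
        Matrix.of_apply, Matrix.zero_apply, zero_mul, Finset.sum_const_zero, zero_add,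
        Sum.elim_inl, Sum.elim_inr]
      have hinner : ∀ j : Fin (s+1),
          (∑ l, (if (j : ℕ) = 0 then (1 : Matrix (Fin m) (Fin m) ℝ) i l else 0)
              * ud ((k : ℕ) + (j : ℕ)) l)
          = (fun jn => if jn = 0 then ud ((k : ℕ)) i else 0) ((j : ℕ)) := by
        intro j
        by_cases hj : (j : ℕ) = 0
        · simp [hj, one_apply]
        · simp [hj]
      rw [Finset.sum_congr rfl (fun j _ => hinner j),
        Fin.sum_univ_eq_sum_range (fun jn => if jn = 0 then ud ((k : ℕ)) i else 0) (s+1),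
        Finset.sum_range_succ']
      simp
    · -- y row
      rw [Matrix.mul_apply, Fintype.sum_sum_type, Fintype.sum_prod_type]
      simp only [hM, hV, hW, fromBlocks_apply₂₁, fromBlocks_apply₂₂, fromRows_apply_inr,
        Matrix.of_apply, Sum.elim_inl, Sum.elim_inr]
      have hk1 : (k : ℕ) + 1 ≤ T := k.isLt
      -- compute the left-hand side
      have hy : yd ((k : ℕ) + 1) i
          = ((C1 * A1) *ᵥ z1d (k : ℕ)) i + ((C1 * B1) *ᵥ ud (k : ℕ)) i
            - ∑ j ∈ Finset.range s, ((C2 * (R ^ j * B2)) *ᵥ ud ((k : ℕ) + 1 + j)) i := by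
        rw [hyd _ hk1, hxd _ hk1, Matrix.mulVec_mulVec]
        have expand : ((C * P) *ᵥ fun i' => Sum.elim (z1d ((k : ℕ) + 1)) (z2d ((k : ℕ) + 1))
            (finSumFinEquiv.symm i')) i
            = (C1 *ᵥ z1d ((k : ℕ) + 1)) i + (C2 *ᵥ z2d ((k : ℕ) + 1)) i := by
          simp only [Matrix.mulVec, dotProduct]
          rw [← Fintype.sum_equiv finSumFinEquiv
            (fun j'' => (C * P) i (finSumFinEquiv j'') *
              Sum.elim (z1d ((k : ℕ) + 1)) (z2d ((k : ℕ) + 1)) j'')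
            _ (fun x => by simp), Fintype.sum_sum_type]
          congr 1
          · exact Finset.sum_congr rfl fun j _ => by
              have := congrFun (congrFun hC i) (Sum.inl j)
              simp only [submatrix_apply, id_eq] at this
              rw [this, fromCols_apply_inl]; rfl
          · exact Finset.sum_congr rfl fun j _ => by
              have := congrFun (congrFun hC i) (Sum.inr j)
              simp only [submatrix_apply, id_eq] at this
              rw [this, fromCols_apply_inr]; rfl
        rw [expand, hz1 (k : ℕ) k.isLt, hz2 ((k : ℕ) + 1) hk1]
        rw [Matrix.mulVec_add, Matrix.mulVec_mulVec, Matrix.mulVec_mulVec]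
        have hds : C2 *ᵥ (∑ j ∈ Finset.range s, (R ^ j * B2) *ᵥ ud ((k : ℕ) + 1 + j))
            = ∑ j ∈ Finset.range s, (C2 * (R ^ j * B2)) *ᵥ ud ((k : ℕ) + 1 + j) := by
          rw [show C2 *ᵥ (∑ j ∈ Finset.range s, (R ^ j * B2) *ᵥ ud ((k : ℕ) + 1 + j))
              = C2.mulVecLin (∑ j ∈ Finset.range s, (R ^ j * B2) *ᵥ ud ((k : ℕ) + 1 + j))
              from rfl, map_sum]
          exact Finset.sum_congr rfl fun j _ => by
            rw [Matrix.mulVecLin_apply, Matrix.mulVec_mulVec]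
        rw [Matrix.mulVec_neg, hds]
        simp [Pi.add_apply, Finset.sum_apply, sub_eq_add_neg]
      rw [hy]
      -- compute the right-hand side second sum
      have hinner : ∀ j : Fin (s+1),
          (∑ l, (if (j : ℕ) = 0 then (C1 * B1) i l
              else -((C2 * R ^ ((j : ℕ) - 1) * B2) i l)) * ud ((k : ℕ) + (j : ℕ)) l)
          = (fun jn => if jn = 0 then ((C1 * B1) *ᵥ ud (k : ℕ)) i
              else -(((C2 * R ^ (jn - 1) * B2) *ᵥ ud ((k : ℕ) + jn)) i)) ((j : ℕ)) := by
        intro j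
        by_cases hj : (j : ℕ) = 0
        · simp [hj, Matrix.mulVec, dotProduct]
        · simp only [hj, if_false, Matrix.mulVec, dotProduct, neg_mul,
            Finset.sum_neg_distrib]
      rw [Finset.sum_congr rfl (fun j _ => hinner j),
        Fin.sum_univ_eq_sum_range
          (fun jn => if jn = 0 then ((C1 * B1) *ᵥ ud (k : ℕ)) i
            else -(((C2 * R ^ (jn - 1) * B2) *ᵥ ud ((k : ℕ) + jn)) i)) (s+1),
        Finset.sum_range_succ']
      simp only [if_true, Nat.succ_ne_zero, if_false, Nat.add_sub_cancel]
      have hfirst : ∑ j, (C1 * A1) i j * z1d (k : ℕ) j = ((C1 * A1) *ᵥ z1d (k : ℕ)) i := rfl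
      rw [hfirst]
      have hshift : ∑ j ∈ Finset.range s, -(((C2 * R ^ j * B2) *ᵥ ud ((k : ℕ) + (j + 1))) i)
          = -∑ j ∈ Finset.range s, ((C2 * (R ^ j * B2)) *ᵥ ud ((k : ℕ) + 1 + j)) i := by
        rw [← Finset.sum_neg_distrib]
        exact Finset.sum_congr rfl fun j _ => by
          rw [Matrix.mul_assoc, show (k : ℕ) + (j + 1) = (k : ℕ) + 1 + j by omega]
      rw [hshift]
      ring
  -- Step C : M reindexed is a block triangular matrix
  have stepC : M.submatrix ⇑(rowEquiv' (Fin n1) (Fin m) (Fin n2) (Fin p))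
      ⇑(shiftEquiv' n1 s m) = fromBlocks 1 0 X N := by
    ext r c
    rcases r with (i | i) | (i | i) <;> rcases c with (j | l) | ⟨j, l⟩ <;>
      simp only [hM, hN, hX, submatrix_apply, rowEquiv', shiftEquiv', Equiv.coe_fn_mk,
        fromBlocks_apply₁₁, fromBlocks_apply₁₂, fromBlocks_apply₂₁, fromBlocks_apply₂₂,
        fromRows_apply_inl, fromRows_apply_inr, Matrix.of_apply,
        Matrix.zero_apply, Matrix.neg_apply]
    all_goals try (simp [one_apply, Fin.val_succ, Nat.add_sub_cancel,
      show (0:ℕ) < s from by omega]; done)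
    · have hv : ((j.succ : Fin (s+1)) : ℕ) = (j : ℕ) + 1 := Fin.val_succ j
      rw [hv]
      by_cases hjs : (j : ℕ) + 1 < s
      · rw [if_pos hjs]
      · have hj1 : (j : ℕ) + 1 = s := by have := j.isLt; omega
        rw [if_neg hjs, hj1, hR]
        simp
  have stepD : N = (Matrix.fromRows R C2 * Q) * (-1 : Matrix (Fin s × Fin m) (Fin s × Fin m) ℝ) := by
    rw [Matrix.mul_neg, Matrix.mul_one, hN]
    ext i jl
    obtain ⟨j, l⟩ := jl
    rcases i with i | i
    · have h2 : (Matrix.fromRows R C2 * Q) (Sum.inl i) (j, l)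
          = (R * (R ^ (j : ℕ) * B2)) i l := by
        rw [Matrix.mul_apply, Matrix.mul_apply]
        exact Finset.sum_congr rfl fun x _ => by simp [hQ]
      simp only [fromRows_apply_inl, Matrix.of_apply, Matrix.neg_apply]
      rw [h2, ← Matrix.mul_assoc, ← pow_succ']
    · have h2 : (Matrix.fromRows R C2 * Q) (Sum.inr i) (j, l)
          = (C2 * (R ^ (j : ℕ) * B2)) i l := by
        rw [Matrix.mul_apply, Matrix.mul_apply]
        exact Finset.sum_congr rfl fun x _ => by simp [hQ]
      simp only [fromRows_apply_inr, Matrix.of_apply, Matrix.neg_apply]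
      rw [h2, ← Matrix.mul_assoc]
  -- glue
  have hPdet : IsUnit Pb.det := by
    rw [hPb, det_fromBlocks_zero₂₁, det_submatrix_equiv_self, det_one, mul_one]
    exact (Matrix.isUnit_iff_isUnit_det P).mp hP
  have hWrank : W.rank = Fintype.card (Fin n1 ⊕ (Fin (s + 1) × Fin m)) := by
    rw [hW]
    simpa using hPE
  have r1 : D.rank = V.rank := by
    rw [← myrank_submatrix_equiv D (Equiv.sumCongr finSumFinEquiv (Equiv.refl (Fin m ⊕ Fin p))) (Equiv.refl (Fin T)), stepA,
      rank_mul_eq_right_of_isUnit_det Pb V hPdet]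
  have r2 : V.rank = M.rank := by
    rw [stepB, myrank_mul_full_row_rank M W hWrank]
  have r3 : M.rank = (n1 + m) + N.rank := by
    rw [← myrank_submatrix_equiv M (rowEquiv' (Fin n1) (Fin m) (Fin n2) (Fin p))
      (shiftEquiv' n1 s m), stepC]
    have hfac : (fromBlocks (1 : Matrix (Fin n1 ⊕ Fin m) (Fin n1 ⊕ Fin m) ℝ) 0 X N) =
        (fromBlocks 1 0 X 1 : Matrix ((Fin n1 ⊕ Fin m) ⊕ (Fin n2 ⊕ Fin p))
          ((Fin n1 ⊕ Fin m) ⊕ (Fin n2 ⊕ Fin p)) ℝ) *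
          (fromBlocks 1 0 0 N : Matrix ((Fin n1 ⊕ Fin m) ⊕ (Fin n2 ⊕ Fin p))
          ((Fin n1 ⊕ Fin m) ⊕ (Fin s × Fin m)) ℝ) := by
      rw [fromBlocks_multiply]; simp
    have hdet2 : IsUnit (fromBlocks (1 : Matrix (Fin n1 ⊕ Fin m) (Fin n1 ⊕ Fin m) ℝ) 0 X 1).det := by
      rw [det_fromBlocks_zero₁₂]; simp
    rw [hfac, rank_mul_eq_right_of_isUnit_det _ _ hdet2, myrank_fromBlocks_diag, rank_one]
    simp
  have r4 : N.rank = (Matrix.fromRows R C2 * Q).rank := by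
    rw [stepD]
    apply rank_mul_eq_left_of_isUnit_det
    rw [show (-1 : Matrix (Fin s × Fin m) (Fin s × Fin m) ℝ) = -(1) from rfl, det_neg, det_one,
      mul_one]
    exact (isUnit_one.neg).pow _
  rw [r1, r2, r3, r4]
end
end

section
/- Assume the Weierstrass decomposition and historical data hypotheses. If rank col(X_p, U_p, Y_f) = n + m, then the (n+p) × n stacked matrix col(E, C) has rank n. -/
open Matrix

noncomputable section

namespace Stmt7Aux

/-- Extension by zero on the left summand, as a linear map. -/
def elimL (α β : Type) : (α → ℝ) →ₗ[ℝ] (α ⊕ β → ℝ) where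
  toFun a := Sum.elim a 0
  map_add' a b := by funext x; cases x <;> simp
  map_smul' c a := by funext x; cases x <;> simp

/-- Extension by zero on the right summand, as a linear map. -/
def elimR (α β : Type) : (β → ℝ) →ₗ[ℝ] (α ⊕ β → ℝ) where
  toFun b := Sum.elim 0 b
  map_add' a b := by funext x; cases x <;> simp
  map_smul' c a := by funext x; cases x <;> simp

@[simp] lemma elimL_apply {α β : Type} (a : α → ℝ) : elimL α β a = Sum.elim a (0 : β → ℝ) := rfl
@[simp] lemma elimR_apply {α β : Type} (b : β → ℝ) : elimR α β b = Sum.elim (0 : α → ℝ) b := rfl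

/-- `ev a b` is the vector on `Fin (n1+n2)` corresponding to the pair `(a,b)`. -/
def ev (n1 n2 : ℕ) (a : Fin n1 → ℝ) (b : Fin n2 → ℝ) : Fin (n1 + n2) → ℝ :=
  Sum.elim a b ∘ ⇑(finSumFinEquiv (m := n1) (n := n2)).symm

@[simp] lemma ev_apply_inl (n1 n2 : ℕ) (a : Fin n1 → ℝ) (b : Fin n2 → ℝ) (j : Fin n1) :
    ev n1 n2 a b (finSumFinEquiv (Sum.inl j)) = a j := by
  simp [ev]

@[simp] lemma ev_apply_inr (n1 n2 : ℕ) (a : Fin n1 → ℝ) (b : Fin n2 → ℝ) (j : Fin n2) :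
    ev n1 n2 a b (finSumFinEquiv (Sum.inr j)) = b j := by
  simp [ev]

lemma ev_zero_zero (n1 n2 : ℕ) : ev n1 n2 0 0 = 0 := by
  funext i
  rw [ev, Function.comp_apply]
  cases (finSumFinEquiv (m := n1) (n := n2)).symm i <;> simp

/-- `ev a 0` as a linear map. -/
def evL1 (n1 n2 : ℕ) : (Fin n1 → ℝ) →ₗ[ℝ] (Fin (n1 + n2) → ℝ) :=
  (LinearMap.funLeft ℝ ℝ ⇑(finSumFinEquiv (m := n1) (n := n2)).symm).comp (elimL _ _)

/-- `ev 0 b` as a linear map. -/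
def evL2 (n1 n2 : ℕ) : (Fin n2 → ℝ) →ₗ[ℝ] (Fin (n1 + n2) → ℝ) :=
  (LinearMap.funLeft ℝ ℝ ⇑(finSumFinEquiv (m := n1) (n := n2)).symm).comp (elimR _ _)

@[simp] lemma evL1_apply (n1 n2 : ℕ) (a : Fin n1 → ℝ) : evL1 n1 n2 a = ev n1 n2 a 0 := rfl
@[simp] lemma evL2_apply (n1 n2 : ℕ) (b : Fin n2 → ℝ) : evL2 n1 n2 b = ev n1 n2 0 b := rfl

lemma ev_add_split (n1 n2 : ℕ) (a : Fin n1 → ℝ) (b c : Fin n2 → ℝ) :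
    ev n1 n2 a (b + c) = ev n1 n2 a 0 + ev n1 n2 0 b + ev n1 n2 0 c := by
  funext i
  simp only [ev, Function.comp_apply, Pi.add_apply]
  cases (finSumFinEquiv (m := n1) (n := n2)).symm i <;> simp

@[simp] lemma ev_neg (n1 n2 : ℕ) (b : Fin n2 → ℝ) :
    ev n1 n2 0 (-b) = -(ev n1 n2 0 b) := by
  funext i
  simp only [ev, Function.comp_apply, Pi.neg_apply]
  cases (finSumFinEquiv (m := n1) (n := n2)).symm i <;> simp

lemma ev_split (n1 n2 : ℕ) (a : Fin n1 → ℝ) (b c : Fin n2 → ℝ) :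
    ev n1 n2 a (-b + c) = ev n1 n2 a 0 + -(ev n1 n2 0 b) + ev n1 n2 0 c := by
  funext i
  simp only [ev, Function.comp_apply, Pi.add_apply, Pi.neg_apply]
  cases (finSumFinEquiv (m := n1) (n := n2)).symm i <;> simp

end Stmt7Aux

theorem stmt_7 (n1 n2 s m p T : ℕ) (hs : 1 ≤ s) (hT : 1 ≤ T)
    (E A : Matrix (Fin (n1 + n2)) (Fin (n1 + n2)) ℝ)
    (B : Matrix (Fin (n1 + n2)) (Fin m) ℝ)
    (C : Matrix (Fin p) (Fin (n1 + n2)) ℝ)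
    (S P : Matrix (Fin (n1 + n2)) (Fin (n1 + n2)) ℝ)
    (hS : IsUnit S) (hP : IsUnit P)
    (A1 : Matrix (Fin n1) (Fin n1) ℝ) (R : Matrix (Fin n2) (Fin n2) ℝ)
    (B1 : Matrix (Fin n1) (Fin m) ℝ) (B2 : Matrix (Fin n2) (Fin m) ℝ)
    (C1 : Matrix (Fin p) (Fin n1) ℝ) (C2 : Matrix (Fin p) (Fin n2) ℝ)
    (hR : R ^ s = 0)
    (hE : (S * E * P).submatrix ⇑finSumFinEquiv ⇑finSumFinEquiv = Matrix.fromBlocks 1 0 0 R)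
    (hA : (S * A * P).submatrix ⇑finSumFinEquiv ⇑finSumFinEquiv = Matrix.fromBlocks A1 0 0 1)
    (hB : (S * B).submatrix ⇑finSumFinEquiv id = Matrix.fromRows B1 B2)
    (hC : (C * P).submatrix id ⇑finSumFinEquiv = Matrix.fromCols C1 C2)
    (ud : ℕ → Fin m → ℝ) (z1d : ℕ → Fin n1 → ℝ) (z2d : ℕ → Fin n2 → ℝ)
    (xd : ℕ → Fin (n1 + n2) → ℝ) (yd : ℕ → Fin p → ℝ)
    (hz1 : ∀ k < T, z1d (k + 1) = A1 *ᵥ z1d k + B1 *ᵥ ud k)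
    (hz2 : ∀ k ≤ T, z2d k = -(∑ j ∈ Finset.range s, ((R ^ j * B2) *ᵥ ud (k + j))))
    (hxd : ∀ k ≤ T, xd k = P *ᵥ (fun i => Sum.elim (z1d k) (z2d k) (finSumFinEquiv.symm i)))
    (hyd : ∀ k ≤ T, yd k = C *ᵥ xd k)
    (hrk : (Matrix.fromRows (histMat T xd 0)
      (Matrix.fromRows (histMat T ud 0) (histMat T yd 1))).rank = (n1 + n2) + m) :
    (Matrix.fromRows E C).rank = n1 + n2 := by
  classical
  open Stmt7Aux in
  have hPdet : IsUnit P.det := (Matrix.isUnit_iff_isUnit_det P).mp hP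
  -- basic facts about the Weierstrass form
  have hCP : ∀ (a : Fin n1 → ℝ) (b : Fin n2 → ℝ),
      (C * P) *ᵥ Stmt7Aux.ev n1 n2 a b = C1 *ᵥ a + C2 *ᵥ b := by
    intro a b
    have h := Matrix.submatrix_mulVec_equiv (C * P) (Sum.elim a b) id finSumFinEquiv
    rw [hC] at h
    simpa [Stmt7Aux.ev] using h.symm
  have hSEP : ∀ (a : Fin n1 → ℝ) (b : Fin n2 → ℝ),
      (S * E * P) *ᵥ Stmt7Aux.ev n1 n2 a b = Stmt7Aux.ev n1 n2 a (R *ᵥ b) := by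
    intro a b
    have h := Matrix.submatrix_mulVec_equiv (S * E * P) (Sum.elim a b)
      ⇑finSumFinEquiv finSumFinEquiv
    rw [hE, Matrix.fromBlocks_mulVec] at h
    funext i
    have h2 := congrFun h ((finSumFinEquiv (m := n1) (n := n2)).symm i)
    simp only [Function.comp_apply, Equiv.apply_symm_apply] at h2
    have h3 : ((S * E * P) *ᵥ Sum.elim a b ∘ ⇑finSumFinEquiv.symm) i
        = ((S * E * P) *ᵥ Stmt7Aux.ev n1 n2 a b) i := rfl
    rw [h3] at h2
    rw [← h2]
    show _ = Sum.elim a (R *ᵥ b) ((finSumFinEquiv (m := n1) (n := n2)).symm i)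
    cases hx : (finSumFinEquiv (m := n1) (n := n2)).symm i <;>
      simp [hx, Matrix.one_mulVec, Matrix.zero_mulVec]
  -- the fast-state recursion
  have hz2' : ∀ k, k < T → z2d k = -(B2 *ᵥ ud k) + R *ᵥ z2d (k + 1) := by
    intro k hk
    have hf : ∀ j : ℕ, R *ᵥ ((R ^ j * B2) *ᵥ ud (k + 1 + j)) =
        (R ^ (j + 1) * B2) *ᵥ ud (k + (j + 1)) := by
      intro j
      have hj : k + 1 + j = k + (j + 1) := by omega
      rw [hj, Matrix.mulVec_mulVec, ← Matrix.mul_assoc, ← pow_succ']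
    have hRz : R *ᵥ z2d (k + 1) =
        -(∑ j ∈ Finset.range s, (R ^ (j + 1) * B2) *ᵥ ud (k + (j + 1))) := by
      rw [hz2 (k + 1) (by omega), Matrix.mulVec_neg]
      congr 1
      rw [show (R *ᵥ ∑ j ∈ Finset.range s, (R ^ j * B2) *ᵥ ud (k + 1 + j))
          = R.mulVecLin (∑ j ∈ Finset.range s, (R ^ j * B2) *ᵥ ud (k + 1 + j)) from rfl,
        map_sum]
      exact Finset.sum_congr rfl fun j _ => hf j
    set f : ℕ → (Fin n2 → ℝ) := fun i => (R ^ i * B2) *ᵥ ud (k + i) with hfdef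
    have hshift : ∑ j ∈ Finset.range s, f (j + 1) = (∑ j ∈ Finset.range s, f j) - f 0 := by
      have h1 := Finset.sum_range_succ' f s
      have h2 := Finset.sum_range_succ f s
      have hfs : f s = 0 := by simp [hfdef, hR]
      rw [hfs, add_zero] at h2
      rw [h2] at h1
      exact eq_sub_of_add_eq h1.symm
    have hf0 : f 0 = B2 *ᵥ ud k := by simp [hfdef]
    rw [hz2 k (by omega), hRz]
    show -(∑ j ∈ Finset.range s, f j) = -(B2 *ᵥ ud k) + -(∑ j ∈ Finset.range s, f (j + 1))
    rw [hshift, ← hf0]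
    abel
  -- the output formula
  have hy' : ∀ k, k < T → yd (k + 1) =
      (C1 * A1) *ᵥ z1d k + (C1 * B1) *ᵥ ud k + C2 *ᵥ z2d (k + 1) := by
    intro k hk
    have hx1 : xd (k + 1) = P *ᵥ Stmt7Aux.ev n1 n2 (z1d (k + 1)) (z2d (k + 1)) :=
      hxd (k + 1) (by omega)
    rw [hyd (k + 1) (by omega), hx1, Matrix.mulVec_mulVec, hCP, hz1 k hk,
      Matrix.mulVec_add, Matrix.mulVec_mulVec, Matrix.mulVec_mulVec]
  -- the three column-generating linear maps
  set jx : (Fin (n1 + n2) → ℝ) →ₗ[ℝ] (Fin (n1 + n2) ⊕ (Fin m ⊕ Fin p) → ℝ) :=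
    Stmt7Aux.elimL _ _ with hjx
  set ju : (Fin m → ℝ) →ₗ[ℝ] (Fin (n1 + n2) ⊕ (Fin m ⊕ Fin p) → ℝ) :=
    (Stmt7Aux.elimR _ _).comp (Stmt7Aux.elimL (Fin m) (Fin p)) with hju
  set jy : (Fin p → ℝ) →ₗ[ℝ] (Fin (n1 + n2) ⊕ (Fin m ⊕ Fin p) → ℝ) :=
    (Stmt7Aux.elimR (Fin (n1 + n2)) (Fin m ⊕ Fin p)).comp (Stmt7Aux.elimR (Fin m) (Fin p))
    with hjy
  set Ψ1 : (Fin n1 → ℝ) →ₗ[ℝ] (Fin (n1 + n2) ⊕ (Fin m ⊕ Fin p) → ℝ) :=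
    jx.comp (P.mulVecLin.comp (Stmt7Aux.evL1 n1 n2)) + jy.comp ((C1 * A1).mulVecLin)
    with hΨ1
  set Ψ2 : (Fin m → ℝ) →ₗ[ℝ] (Fin (n1 + n2) ⊕ (Fin m ⊕ Fin p) → ℝ) :=
    jx.comp (P.mulVecLin.comp ((Stmt7Aux.evL2 n1 n2).comp (-B2.mulVecLin))) + ju
      + jy.comp ((C1 * B1).mulVecLin) with hΨ2
  set Ψ3 : (Fin n2 → ℝ) →ₗ[ℝ] (Fin (n1 + n2) ⊕ (Fin m ⊕ Fin p) → ℝ) :=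
    jx.comp (P.mulVecLin.comp ((Stmt7Aux.evL2 n1 n2).comp R.mulVecLin))
      + jy.comp (C2.mulVecLin) with hΨ3
  set D := Matrix.fromRows (histMat T xd 0)
      (Matrix.fromRows (histMat T ud 0) (histMat T yd 1)) with hD
  -- every column of the data matrix lies in the sum of the ranges
  have hcol : ∀ k : Fin T, Dᵀ k = Ψ1 (z1d k) + Ψ2 (ud k) + Ψ3 (z2d ((k : ℕ) + 1)) := by
    intro k
    have hk : (k : ℕ) < T := k.isLt
    have hx0 : xd (k : ℕ) = P *ᵥ Stmt7Aux.ev n1 n2 (z1d k) (z2d k) := hxd _ hk.le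
    have hxsplit : xd (k : ℕ) =
        P *ᵥ Stmt7Aux.ev n1 n2 (z1d k) 0
        + -(P *ᵥ Stmt7Aux.ev n1 n2 0 (B2 *ᵥ ud k))
        + P *ᵥ Stmt7Aux.ev n1 n2 0 (R *ᵥ z2d ((k : ℕ) + 1)) := by
      rw [hx0, hz2' k hk, Stmt7Aux.ev_split, Matrix.mulVec_add, Matrix.mulVec_add,
        Matrix.mulVec_neg]
    funext x
    rcases x with i | i | i
    · show xd ((k : ℕ) + 0) i = _
      rw [Nat.add_zero, hxsplit]
      simp only [hΨ1, hΨ2, hΨ3, hjx, hju, hjy, LinearMap.add_apply, LinearMap.comp_apply,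
        LinearMap.neg_apply, map_neg, Matrix.mulVecLin_apply, Stmt7Aux.elimL_apply,
        Stmt7Aux.elimR_apply, Stmt7Aux.evL1_apply, Stmt7Aux.evL2_apply, Sum.elim_inl,
        Pi.add_apply, Pi.neg_apply, Pi.zero_apply, Matrix.mulVec_neg, Stmt7Aux.ev_neg]
      ring
    · show ud ((k : ℕ) + 0) i = _
      rw [Nat.add_zero]
      simp [hΨ1, hΨ2, hΨ3, hjx, hju, hjy, Stmt7Aux.elimL, Stmt7Aux.elimR]
    · show yd ((k : ℕ) + 1) i = _
      rw [hy' k hk]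
      simp [hΨ1, hΨ2, hΨ3, hjx, hju, hjy, Stmt7Aux.elimL, Stmt7Aux.elimR]
  have hsub : LinearMap.range D.mulVecLin ≤
      LinearMap.range Ψ1 ⊔ LinearMap.range Ψ2 ⊔ LinearMap.range Ψ3 := by
    rw [Matrix.range_mulVecLin]
    refine Submodule.span_le.mpr ?_
    rintro _ ⟨k, rfl⟩
    rw [show D.col k = Dᵀ k from rfl, hcol k]
    exact Submodule.add_mem _
      (Submodule.add_mem _
        (Submodule.mem_sup_left (Submodule.mem_sup_left (LinearMap.mem_range_self _ _)))
        (Submodule.mem_sup_left (Submodule.mem_sup_right (LinearMap.mem_range_self _ _))))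
      (Submodule.mem_sup_right (LinearMap.mem_range_self _ _))
  have hfr1 : Module.finrank ℝ ↥(LinearMap.range Ψ1) ≤ n1 :=
    (LinearMap.finrank_range_le Ψ1).trans_eq (Module.finrank_fin_fun ℝ)
  have hfr2 : Module.finrank ℝ ↥(LinearMap.range Ψ2) ≤ m :=
    (LinearMap.finrank_range_le Ψ2).trans_eq (Module.finrank_fin_fun ℝ)
  have hle : (n1 + n2) + m ≤ n1 + m + Module.finrank ℝ ↥(LinearMap.range Ψ3) := by
    calc (n1 + n2) + m = D.rank := hrk.symm
      _ = Module.finrank ℝ ↥(LinearMap.range D.mulVecLin) := rfl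
      _ ≤ Module.finrank ℝ
            ↥(LinearMap.range Ψ1 ⊔ LinearMap.range Ψ2 ⊔ LinearMap.range Ψ3) :=
          Submodule.finrank_mono hsub
      _ ≤ Module.finrank ℝ ↥(LinearMap.range Ψ1 ⊔ LinearMap.range Ψ2)
            + Module.finrank ℝ ↥(LinearMap.range Ψ3) :=
          Submodule.finrank_add_le_finrank_add_finrank _ _
      _ ≤ (Module.finrank ℝ ↥(LinearMap.range Ψ1)
            + Module.finrank ℝ ↥(LinearMap.range Ψ2))
            + Module.finrank ℝ ↥(LinearMap.range Ψ3) :=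
          Nat.add_le_add_right (Submodule.finrank_add_le_finrank_add_finrank _ _) _
      _ ≤ n1 + m + Module.finrank ℝ ↥(LinearMap.range Ψ3) :=
          Nat.add_le_add_right (add_le_add hfr1 hfr2) _
  have hker3 : LinearMap.ker Ψ3 = ⊥ := by
    have h := LinearMap.finrank_range_add_finrank_ker Ψ3
    rw [Module.finrank_fin_fun] at h
    have h0 : Module.finrank ℝ ↥(LinearMap.ker Ψ3) = 0 := by omega
    exact Submodule.finrank_eq_zero.mp h0
  have hinj3 : Function.Injective Ψ3 := LinearMap.ker_eq_bot.mp hker3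
  -- the stacked matrix has trivial kernel
  have hkerEC : LinearMap.ker (Matrix.fromRows E C).mulVecLin = ⊥ := by
    refine LinearMap.ker_eq_bot'.mpr fun v hv => ?_
    have hv' : Matrix.fromRows E C *ᵥ v = 0 := hv
    rw [Matrix.fromRows_mulVec] at hv'
    have hEv : E *ᵥ v = 0 := funext fun i => congrFun hv' (Sum.inl i)
    have hCv : C *ᵥ v = 0 := funext fun i => congrFun hv' (Sum.inr i)
    set w : Fin (n1 + n2) → ℝ := P⁻¹ *ᵥ v with hwdef
    have hvw : v = P *ᵥ w := by
      rw [hwdef, Matrix.mulVec_mulVec, Matrix.mul_nonsing_inv _ hPdet, Matrix.one_mulVec]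
    set a : Fin n1 → ℝ := fun j => w (finSumFinEquiv (Sum.inl j)) with hadef
    set b : Fin n2 → ℝ := fun j => w (finSumFinEquiv (Sum.inr j)) with hbdef
    have hw : w = Stmt7Aux.ev n1 n2 a b := by
      funext i
      rw [Stmt7Aux.ev, Function.comp_apply]
      cases hx : (finSumFinEquiv (m := n1) (n := n2)).symm i with
      | inl j =>
        rw [Sum.elim_inl]
        simp only [hadef]
        rw [← hx, Equiv.apply_symm_apply]
      | inr j =>
        rw [Sum.elim_inr]
        simp only [hbdef]
        rw [← hx, Equiv.apply_symm_apply]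
    have hSEPw : Stmt7Aux.ev n1 n2 a (R *ᵥ b) = 0 := by
      rw [← hSEP a b, ← hw]
      calc (S * E * P) *ᵥ w = (S * E) *ᵥ (P *ᵥ w) := (Matrix.mulVec_mulVec _ _ _).symm
        _ = (S * E) *ᵥ v := by rw [← hvw]
        _ = S *ᵥ (E *ᵥ v) := (Matrix.mulVec_mulVec _ _ _).symm
        _ = 0 := by rw [hEv, Matrix.mulVec_zero]
    have ha : a = 0 := by
      funext j
      have h := congrFun hSEPw (finSumFinEquiv (Sum.inl j))
      simpa [Stmt7Aux.ev] using h
    have hb1 : R *ᵥ b = 0 := by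
      funext j
      have h := congrFun hSEPw (finSumFinEquiv (Sum.inr j))
      simpa [Stmt7Aux.ev] using h
    have hCPw : C1 *ᵥ a + C2 *ᵥ b = 0 := by
      rw [← hCP a b, ← hw, ← Matrix.mulVec_mulVec, ← hvw, hCv]
    have hb2 : C2 *ᵥ b = 0 := by
      rw [ha, Matrix.mulVec_zero, zero_add] at hCPw; exact hCPw
    have hb : b = 0 := by
      apply hinj3
      rw [map_zero]
      simp only [hΨ3, LinearMap.add_apply, LinearMap.comp_apply, Matrix.mulVecLin_apply,
        Stmt7Aux.evL2_apply]
      rw [hb1, hb2, Stmt7Aux.ev_zero_zero, Matrix.mulVec_zero, map_zero, map_zero, add_zero]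
    have hwz : w = 0 := by rw [hw, ha, hb, Stmt7Aux.ev_zero_zero]
    rw [hvw, hwz, Matrix.mulVec_zero]
  have hfin := LinearMap.finrank_range_add_finrank_ker (Matrix.fromRows E C).mulVecLin
  rw [hkerEC, finrank_bot, add_zero, Module.finrank_fin_fun] at hfin
  exact hfin
end
end

section
/- Assume the Weierstrass decomposition, historical data, and persistent excitation hypotheses, and assume the fast subsystem is controllable, i.e. the matrix Q = [B2, R·B2, …, R^{s−1}·B2] ∈ ℝ^{n2×(s·m)} has rank n2. Then the (n+p) × n stacked matrix col(E, C) has rank n if and only if rank col(X_p, U_p, Y_f) = n + m. -/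
open Matrix

noncomputable section

section RankHelpers

open Module

lemma rank_submatrix'' {m n m' n' : Type} [Fintype n] [Fintype n'] (A : Matrix m n ℝ)
    (e₁ : m' ≃ m) (e₂ : n' ≃ n) : (A.submatrix e₁ e₂).rank = A.rank := by
  have : A.submatrix ⇑e₁ ⇑e₂ = reindex e₁.symm e₂.symm A := rfl
  rw [this, Matrix.rank, Matrix.rank, mulVecLin_reindex, LinearMap.range_comp,
    LinearMap.range_comp, LinearEquiv.range, Submodule.map_top, LinearEquiv.finrank_map_eq]

lemma surj_of_full_rank {α β : Type} [Fintype α] [Fintype β] (A : Matrix α β ℝ)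
    (h : A.rank = Fintype.card α) : Function.Surjective A.mulVecLin := by
  rw [← LinearMap.range_eq_top]
  apply Submodule.eq_top_of_finrank_eq
  rw [show finrank ℝ (α → ℝ) = Fintype.card α by simp [Module.finrank_pi]]
  exact h

lemma rank_mul_of_surj {α β γ : Type} [Fintype β] [Fintype γ] (A : Matrix α β ℝ)
    (B : Matrix β γ ℝ) (hB : Function.Surjective B.mulVecLin) : (A * B).rank = A.rank := by
  rw [Matrix.rank, mulVecLin_mul, LinearMap.range_comp_of_range_eq_top _
    (LinearMap.range_eq_top.mpr hB), ← Matrix.rank]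

lemma rank_neg' {m n : Type} [Fintype n] (A : Matrix m n ℝ) : (-A).rank = A.rank := by
  rw [Matrix.rank, Matrix.rank, show (-A).mulVecLin = -A.mulVecLin by
    ext v i; simp [Matrix.neg_mulVec], LinearMap.range_neg]

def prodSubmoduleEquiv {M N : Type} [AddCommGroup M] [AddCommGroup N] [Module ℝ M] [Module ℝ N]
    (p : Submodule ℝ M) (q : Submodule ℝ N) : (p.prod q) ≃ₗ[ℝ] p × q where
  toFun x := (⟨x.1.1, x.2.1⟩, ⟨x.1.2, x.2.2⟩)
  invFun x := ⟨(x.1.1, x.2.1), x.1.2, x.2.2⟩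
  map_add' _ _ := rfl
  map_smul' _ _ := rfl
  left_inv _ := rfl
  right_inv _ := rfl

lemma finrank_prod_submodule {M N : Type} [AddCommGroup M] [AddCommGroup N] [Module ℝ M]
    [Module ℝ N] [FiniteDimensional ℝ M] [FiniteDimensional ℝ N]
    (p : Submodule ℝ M) (q : Submodule ℝ N) :
    finrank ℝ (p.prod q) = finrank ℝ p + finrank ℝ q := by
  rw [(prodSubmoduleEquiv p q).finrank_eq, Module.finrank_prod]

lemma range_prodMap' {M N M' N' : Type} [AddCommGroup M] [AddCommGroup N] [AddCommGroup M']
    [AddCommGroup N'] [Module ℝ M] [Module ℝ N] [Module ℝ M'] [Module ℝ N']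
    (f : M →ₗ[ℝ] M') (g : N →ₗ[ℝ] N') :
    LinearMap.range (f.prodMap g) = (LinearMap.range f).prod (LinearMap.range g) := by
  ext ⟨a, b⟩
  constructor
  · rintro ⟨⟨x, y⟩, h⟩
    obtain ⟨rfl, rfl⟩ := Prod.mk.injEq .. ▸ h
    exact ⟨⟨x, by simp [← (Prod.ext_iff.mp h).1]⟩, ⟨y, by simp [← (Prod.ext_iff.mp h).2]⟩⟩
  · rintro ⟨⟨x, hx⟩, ⟨y, hy⟩⟩
    exact ⟨(x, y), by simp [LinearMap.prodMap_apply, hx, hy]⟩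

lemma rank_fromBlocks_one {α β γ : Type} [Fintype α] [DecidableEq α] [Fintype β] [Fintype γ]
    [DecidableEq β] (N : Matrix γ β ℝ) :
    (fromBlocks (1 : Matrix α α ℝ) 0 0 N).rank = Fintype.card α + N.rank := by
  classical
  set eD := LinearEquiv.sumArrowLequivProdArrow α β ℝ ℝ
  set eC := LinearEquiv.sumArrowLequivProdArrow α γ ℝ ℝ
  have key : (fromBlocks (1 : Matrix α α ℝ) 0 0 N).mulVecLin
      = (eC.symm.toLinearMap.comp ((LinearMap.id.prodMap N.mulVecLin).comp eD.toLinearMap)) := by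
    apply LinearMap.ext; intro v
    funext i
    cases i with
    | inl a =>
      simp [Matrix.mulVecLin_apply, Matrix.fromBlocks_mulVec, eD, eC,
        LinearEquiv.sumArrowLequivProdArrow, Equiv.sumArrowEquivProdArrow]
    | inr c =>
      simp [Matrix.mulVecLin_apply, Matrix.fromBlocks_mulVec, eD, eC,
        LinearEquiv.sumArrowLequivProdArrow, Equiv.sumArrowEquivProdArrow]
  rw [Matrix.rank, key, LinearMap.range_comp, LinearMap.range_comp, LinearEquiv.range,
    Submodule.map_top, LinearEquiv.finrank_map_eq, range_prodMap', LinearMap.range_id,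
    finrank_prod_submodule, finrank_top]
  rw [show finrank ℝ (α → ℝ) = Fintype.card α by simp [Module.finrank_pi]]
  rfl

lemma lhs_rank (n1 n2 p : ℕ)
    (E : Matrix (Fin (n1 + n2)) (Fin (n1 + n2)) ℝ)
    (C : Matrix (Fin p) (Fin (n1 + n2)) ℝ)
    (S P : Matrix (Fin (n1 + n2)) (Fin (n1 + n2)) ℝ)
    (hS : IsUnit S) (hP : IsUnit P)
    (R : Matrix (Fin n2) (Fin n2) ℝ)
    (C1 : Matrix (Fin p) (Fin n1) ℝ) (C2 : Matrix (Fin p) (Fin n2) ℝ)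
    (hE : (S * E * P).submatrix ⇑finSumFinEquiv ⇑finSumFinEquiv = Matrix.fromBlocks 1 0 0 R)
    (hC : (C * P).submatrix id ⇑finSumFinEquiv = Matrix.fromCols C1 C2) :
    (Matrix.fromRows E C).rank = n1 + (Matrix.fromRows R C2).rank := by
  classical
  set e := (finSumFinEquiv : Fin n1 ⊕ Fin n2 ≃ Fin (n1 + n2)) with he
  have hdP : IsUnit P.det := (Matrix.isUnit_iff_isUnit_det P).mp hP
  have hdS : IsUnit S.det := (Matrix.isUnit_iff_isUnit_det S).mp hS
  have hE2 : S * E * P = (fromBlocks 1 0 0 R).submatrix ⇑e.symm ⇑e.symm := by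
    rw [← hE]; ext i j; simp
  have hC2 : C * P = (fromCols C1 C2).submatrix id ⇑e.symm := by
    rw [← hC]; ext i j; simp
  set C1e : Matrix (Fin p) (Fin (n1 + n2)) ℝ := (fromCols C1 0).submatrix id ⇑e.symm with hC1e
  set L4 : Matrix (Fin (n1+n2) ⊕ Fin p) (Fin (n1+n2) ⊕ Fin p) ℝ :=
    fromBlocks S 0 (-(C1e * S)) 1 with hL4
  have hdL : IsUnit L4.det := by
    rw [hL4, Matrix.det_fromBlocks_zero₁₂, Matrix.det_one, mul_one]; exact hdS
  have key : L4 * (Matrix.fromRows E C * P)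
      = fromRows (S * E * P) (C * P - C1e * (S * E * P)) := by
    rw [Matrix.fromRows_mul, Matrix.fromBlocks_mul_fromRows]
    simp only [Matrix.zero_mul, add_zero, Matrix.one_mul, Matrix.neg_mul, neg_add_eq_sub,
      Matrix.mul_assoc]
  have hC1eSEP : C1e * (S * E * P) = (fromCols C1 0).submatrix id ⇑e.symm := by
    rw [hC1e, hE2, Matrix.submatrix_mul_equiv (fromCols C1 0) (fromBlocks 1 0 0 R)
      id e.symm ⇑e.symm, Matrix.fromCols_mul_fromBlocks]
    simp
  have hcols : fromCols C1 C2 - fromCols C1 0 = fromCols 0 C2 := by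
    ext i (a | b) <;> simp
  have key2 : C * P - C1e * (S * E * P) = (fromCols 0 C2).submatrix id ⇑e.symm := by
    rw [hC2, hC1eSEP, ← hcols]
    ext i j
    simp [Matrix.sub_apply]
  set σ : Fin n1 ⊕ (Fin n2 ⊕ Fin p) ≃ Fin (n1 + n2) ⊕ Fin p :=
    (Equiv.sumAssoc (Fin n1) (Fin n2) (Fin p)).symm.trans (Equiv.sumCongr e (Equiv.refl (Fin p)))
    with hσ
  have final : (L4 * (Matrix.fromRows E C * P)).submatrix ⇑σ ⇑e
      = fromBlocks 1 0 0 (fromRows R C2) := by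
    rw [key, key2, hE2]
    ext (i | (i | i)) (j | j) <;>
      simp [hσ, Matrix.submatrix_apply, Matrix.one_apply, Sum.inl.injEq]
  have : (Matrix.fromRows E C).rank = (L4 * (Matrix.fromRows E C * P)).rank := by
    rw [Matrix.rank_mul_eq_right_of_isUnit_det L4 _ hdL,
      Matrix.rank_mul_eq_left_of_isUnit_det P _ hdP]
  rw [this, ← rank_submatrix'' (L4 * (Matrix.fromRows E C * P)) σ e, final,
    rank_fromBlocks_one, Fintype.card_fin]

end RankHelpers

set_option maxHeartbeats 2000000 in
theorem stmt_8 (n1 n2 s m p T : ℕ) (hs : 1 ≤ s) (hT : 1 ≤ T)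
    (E A : Matrix (Fin (n1 + n2)) (Fin (n1 + n2)) ℝ)
    (B : Matrix (Fin (n1 + n2)) (Fin m) ℝ)
    (C : Matrix (Fin p) (Fin (n1 + n2)) ℝ)
    (S P : Matrix (Fin (n1 + n2)) (Fin (n1 + n2)) ℝ)
    (hS : IsUnit S) (hP : IsUnit P)
    (A1 : Matrix (Fin n1) (Fin n1) ℝ) (R : Matrix (Fin n2) (Fin n2) ℝ)
    (B1 : Matrix (Fin n1) (Fin m) ℝ) (B2 : Matrix (Fin n2) (Fin m) ℝ)
    (C1 : Matrix (Fin p) (Fin n1) ℝ) (C2 : Matrix (Fin p) (Fin n2) ℝ)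
    (hR : R ^ s = 0)
    (hE : (S * E * P).submatrix ⇑finSumFinEquiv ⇑finSumFinEquiv = Matrix.fromBlocks 1 0 0 R)
    (hA : (S * A * P).submatrix ⇑finSumFinEquiv ⇑finSumFinEquiv = Matrix.fromBlocks A1 0 0 1)
    (hB : (S * B).submatrix ⇑finSumFinEquiv id = Matrix.fromRows B1 B2)
    (hC : (C * P).submatrix id ⇑finSumFinEquiv = Matrix.fromCols C1 C2)
    (ud : ℕ → Fin m → ℝ) (z1d : ℕ → Fin n1 → ℝ) (z2d : ℕ → Fin n2 → ℝ)
    (xd : ℕ → Fin (n1 + n2) → ℝ) (yd : ℕ → Fin p → ℝ)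
    (hz1 : ∀ k < T, z1d (k + 1) = A1 *ᵥ z1d k + B1 *ᵥ ud k)
    (hz2 : ∀ k ≤ T, z2d k = -(∑ j ∈ Finset.range s, ((R ^ j * B2) *ᵥ ud (k + j))))
    (hxd : ∀ k ≤ T, xd k = P *ᵥ (fun i => Sum.elim (z1d k) (z2d k) (finSumFinEquiv.symm i)))
    (hyd : ∀ k ≤ T, yd k = C *ᵥ xd k)
    (hPE : (Matrix.of fun (i : Fin n1 ⊕ (Fin (s + 1) × Fin m)) (k : Fin T) =>
        Sum.elim (z1d (k : ℕ))
          (fun jl => ud ((k : ℕ) + (jl.1 : ℕ)) jl.2) i).rank = n1 + (s + 1) * m)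
    (hQ : (Matrix.of fun (i : Fin n2) (jl : Fin s × Fin m) =>
      (R ^ (jl.1 : ℕ) * B2) i jl.2).rank = n2) :
    (Matrix.fromRows E C).rank = n1 + n2
      ↔ (Matrix.fromRows (histMat T xd 0)
          (Matrix.fromRows (histMat T ud 0) (histMat T yd 1))).rank = (n1 + n2) + m := by
  classical
  have hlhs := lhs_rank n1 n2 p E C S P hS hP R C1 C2 hE hC
  set e := (finSumFinEquiv : Fin n1 ⊕ Fin n2 ≃ Fin (n1 + n2)) with he
  set Z : Matrix (Fin n1 ⊕ (Fin (s + 1) × Fin m)) (Fin T) ℝ :=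
    Matrix.of fun i k => Sum.elim (z1d (k : ℕ))
      (fun jl => ud ((k : ℕ) + (jl.1 : ℕ)) jl.2) i with hZdef
  set Z1 : Matrix (Fin n1) (Fin T) ℝ := Matrix.of fun j k => z1d (k : ℕ) j with hZ1
  set Z2 : Matrix (Fin (s + 1) × Fin m) (Fin T) ℝ :=
    Matrix.of fun jl k => ud ((k : ℕ) + (jl.1 : ℕ)) jl.2 with hZ2
  have hZ : Z = fromRows Z1 Z2 := by ext (i | i) k <;> rfl
  set U1 : Matrix (Fin n2) (Fin (s + 1) × Fin m) ℝ :=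
    Matrix.of (fun i al => -((R ^ (al.1 : ℕ) * B2) i al.2)) with hU1
  set U2 : Matrix (Fin n2) (Fin (s + 1) × Fin m) ℝ :=
    Matrix.of (fun i al => if al.1 = 0 then 0 else -((R ^ (al.1 : ℕ) * B2) i al.2)) with hU2
  set Sel : Matrix (Fin m) (Fin (s + 1) × Fin m) ℝ :=
    Matrix.of (fun l al => if al.1 = 0 ∧ al.2 = l then 1 else 0) with hSel
  set gy : Matrix (Fin p) (Fin (s + 1) × Fin m) ℝ :=
    Matrix.of (fun r al => if al.1 = 0 then (C1 * B1) r al.2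
      else -((C2 * (R ^ ((al.1 : ℕ) - 1) * B2)) r al.2)) with hgy
  set gy2 : Matrix (Fin p) (Fin (s + 1) × Fin m) ℝ :=
    Matrix.of (fun r al => if al.1 = 0 then 0
      else -((C2 * (R ^ ((al.1 : ℕ) - 1) * B2)) r al.2)) with hgy2
  set V : Matrix (Fin n1 ⊕ Fin n2) (Fin n1 ⊕ (Fin (s + 1) × Fin m)) ℝ :=
    fromBlocks 1 0 0 U1 with hV
  set V2 : Matrix (Fin n1 ⊕ Fin n2) (Fin n1 ⊕ (Fin (s + 1) × Fin m)) ℝ :=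
    fromBlocks 1 0 0 U2 with hV2
  set Gu : Matrix (Fin m) (Fin n1 ⊕ (Fin (s + 1) × Fin m)) ℝ := fromCols 0 Sel with hGu
  set Gy : Matrix (Fin p) (Fin n1 ⊕ (Fin (s + 1) × Fin m)) ℝ :=
    fromCols (C1 * A1) gy with hGy
  set Gy2 : Matrix (Fin p) (Fin n1 ⊕ (Fin (s + 1) × Fin m)) ℝ := fromCols 0 gy2 with hGy2
  set P' : Matrix (Fin n1 ⊕ Fin n2) (Fin n1 ⊕ Fin n2) ℝ := P.submatrix ⇑e ⇑e with hP'
  have hdP2 : IsUnit P'.det := by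
    rw [hP', Matrix.det_submatrix_equiv_self]
    exact (Matrix.isUnit_iff_isUnit_det P).mp hP
  set G' := fromRows (P' * V) (fromRows Gu Gy) with hG'
  set J' : Matrix (Fin n1 ⊕ Fin n2) (Fin m) ℝ := fromRows 0 (-B2) with hJ'
  set W1 : Matrix (Fin p) (Fin n1 ⊕ Fin n2) ℝ := fromCols (C1 * A1) 0 with hW1
  set G2 := fromRows V2 (fromRows Gu Gy2) with hG2
  set L : Matrix ((Fin n1 ⊕ Fin n2) ⊕ (Fin m ⊕ Fin p)) ((Fin n1 ⊕ Fin n2) ⊕ (Fin m ⊕ Fin p)) ℝ :=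
    fromBlocks P' (fromCols (P' * J') 0) (fromRows 0 W1) (fromBlocks 1 0 (C1 * B1) 1) with hL
  set er : (Fin n1 ⊕ Fin n2) ⊕ (Fin m ⊕ Fin p) ≃ Fin (n1 + n2) ⊕ (Fin m ⊕ Fin p) :=
    Equiv.sumCongr e (Equiv.refl _) with her
  set D := Matrix.fromRows (histMat T xd 0)
      (Matrix.fromRows (histMat T ud 0) (histMat T yd 1)) with hD
  -- z2 in terms of U1
  have hz2' : ∀ k, k ≤ T → z2d k = U1 *ᵥ (fun al => ud (k + (al.1 : ℕ)) al.2) := by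
    intro k hk
    funext i
    rw [hz2 k hk]
    show -(∑ j ∈ Finset.range s, ((R ^ j * B2) *ᵥ ud (k + j))) i
      = ∑ al : Fin (s + 1) × Fin m, U1 i al * ud (k + (al.1 : ℕ)) al.2
    rw [Fintype.sum_prod_type]
    rw [Fin.sum_univ_castSucc]
    simp only [hU1, Matrix.of_apply, Fin.coe_castSucc, Fin.val_last, hR, Matrix.zero_mul,
      Matrix.zero_apply, neg_zero, zero_mul, Finset.sum_const_zero, add_zero]
    rw [← Fin.sum_univ_eq_sum_range (fun j => ((R ^ j * B2) *ᵥ ud (k + j)))]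
    simp [Matrix.mulVec, dotProduct, Finset.sum_neg_distrib, neg_mul]
  -- V * Z
  have hVZ : V * Z = fromRows Z1 (U1 * Z2) := by
    rw [hZ, hV, Matrix.fromBlocks_mul_fromRows]
    simp only [Matrix.one_mul, Matrix.zero_mul, add_zero, zero_add]
  -- X part
  have eqX : (histMat T xd 0).submatrix ⇑e id = P' * (V * Z) := by
    rw [hVZ]
    ext x k
    have hk : (k : ℕ) ≤ T := by omega
    show xd ((k : ℕ) + 0) (e x) = _
    rw [Nat.add_zero, hxd _ hk]
    show ∑ i, P (e x) i * Sum.elim (z1d k) (z2d k) (e.symm i)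
      = ∑ y, P' x y * (fromRows Z1 (U1 * Z2)) y k
    rw [← Equiv.sum_comp e (fun i => P (e x) i * Sum.elim (z1d k) (z2d k) (e.symm i))]
    apply Finset.sum_congr rfl
    rintro (j | i) -
    · simp only [hP', Matrix.submatrix_apply, Equiv.symm_apply_apply, Sum.elim_inl,
        Matrix.fromRows_apply_inl]
      rfl
    · simp only [hP', Matrix.submatrix_apply, Equiv.symm_apply_apply, Sum.elim_inr]
      congr 1
      rw [hz2' k hk]
      rfl
  -- U part
  have eqU : histMat T ud 0 = Gu * Z := by
    rw [hGu, hZ, Matrix.fromCols_mul_fromRows, Matrix.zero_mul, zero_add]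
    ext l k
    show ud ((k : ℕ) + 0) l = ∑ al, Sel l al * Z2 al k
    rw [Finset.sum_eq_single ((0 : Fin (s + 1)), l)]
    · simp [hSel, hZ2]
    · rintro ⟨a, l'⟩ - hne
      by_cases ha : a = 0
      · subst ha
        have : l' ≠ l := fun h => hne (by rw [h])
        simp [hSel, this]
      · simp [hSel, ha]
    · intro h
      exact absurd (Finset.mem_univ _) h
  have hcp : C * P = (fromCols C1 C2).submatrix id ⇑e.symm := by
    rw [← hC]; ext i j; simp
  have hyy : ∀ k, k ≤ T → ∀ r, yd k r = (C1 *ᵥ z1d k) r + (C2 *ᵥ z2d k) r := by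
    intro k hk r
    rw [hyd k hk, hxd k hk, Matrix.mulVec_mulVec, hcp]
    show ∑ i, (fromCols C1 C2).submatrix id ⇑e.symm r i
        * Sum.elim (z1d k) (z2d k) (e.symm i) = _
    rw [← Equiv.sum_comp e (fun i => (fromCols C1 C2).submatrix id ⇑e.symm r i
      * Sum.elim (z1d k) (z2d k) (e.symm i))]
    simp only [Matrix.submatrix_apply, id_eq, Equiv.symm_apply_apply]
    rw [Fintype.sum_sum_type]
    simp [Matrix.mulVec, dotProduct]
  have hCU : ∀ r (al : Fin (s + 1) × Fin m),
      (C2 * U1) r al = -((C2 * (R ^ (al.1 : ℕ) * B2)) r al.2) := by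
    intro r al
    simp [Matrix.mul_apply, hU1, mul_neg, Matrix.mul_assoc]
  have eqY : histMat T yd 1 = Gy * Z := by
    rw [hZ, hGy, Matrix.fromCols_mul_fromRows]
    ext r k
    have hk : (k : ℕ) < T := k.isLt
    have hk1 : (k : ℕ) + 1 ≤ T := hk
    show yd ((k : ℕ) + 1) r = ((C1 * A1) * Z1 + gy * Z2) r k
    rw [Matrix.add_apply, hyy _ hk1 r, hz1 _ hk, hz2' _ hk1]
    simp only [Matrix.mulVec_add, Matrix.mulVec_mulVec, Pi.add_apply]
    rw [show ((C1 * A1) *ᵥ z1d (k : ℕ)) r = ((C1 * A1) * Z1) r k from rfl, add_assoc]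
    congr 1
    -- remaining : (C1*B1 *ᵥ ud k) r + ((C2*U1) *ᵥ uu) r = (gy * Z2) r k
    have harg : ∀ j : ℕ, (k : ℕ) + 1 + j = (k : ℕ) + (j + 1) := fun j => by omega
    rw [Matrix.mul_apply]
    rw [show (∑ al, gy r al * Z2 al k)
        = ∑ al : Fin (s + 1) × Fin m, gy r al * ud ((k : ℕ) + (al.1 : ℕ)) al.2 from rfl]
    rw [Fintype.sum_prod_type, Fin.sum_univ_succ]
    have hzero : ∀ l, gy r ((0 : Fin (s + 1)), l) * ud ((k : ℕ) + ((0 : Fin (s+1)) : ℕ)) l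
        = (C1 * B1) r l * ud (k : ℕ) l := by
      intro l
      simp [hgy]
    simp only [hzero]
    congr 1
    simp only [Matrix.mulVec, dotProduct, hCU]
    rw [Fintype.sum_prod_type, Fin.sum_univ_castSucc]
    simp only [Fin.coe_castSucc, Fin.val_last, hR, Matrix.mul_zero, Matrix.zero_mul,
      Matrix.zero_apply, neg_zero, zero_mul, Finset.sum_const_zero, add_zero]
    apply Finset.sum_congr rfl
    rintro j -
    apply Finset.sum_congr rfl
    rintro l -
    simp only [hgy, Matrix.of_apply, Fin.succ_ne_zero, if_false, Fin.val_succ,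
      Nat.add_sub_cancel, harg]
  have stepA : D.submatrix ⇑er id = G' * Z := by
    rw [hG', Matrix.fromRows_mul, Matrix.fromRows_mul, Matrix.mul_assoc, ← eqX, ← eqU, ← eqY,
      hD]
    ext (x | (l | r)) k <;> simp [her]
  -- step B
  have hJGu : V2 + J' * Gu = V := by
    have hprod : J' * Gu = fromCols 0 (J' * Sel) := by
      rw [hGu, Matrix.mul_fromCols, Matrix.mul_zero]
    rw [hprod, hV2, hV]
    ext (x | x) (c | ⟨a, l⟩)
    · simp [Matrix.fromBlocks, hJ', Matrix.mul_apply]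
    · by_cases h : a = 0 <;>
        simp [Matrix.fromBlocks, hJ', hSel, Matrix.mul_apply, h, Finset.mul_sum,
          Prod.ext_iff]
    · simp [Matrix.fromBlocks, hJ', Matrix.mul_apply]
    · by_cases h : a = 0
      · subst h
        simp [Matrix.fromBlocks, hJ', hSel, hU1, hU2, Matrix.mul_apply, Prod.ext_iff]
        rw [← Matrix.mul_apply, Matrix.one_mul]
      · simp [Matrix.fromBlocks, hJ', hSel, hU1, hU2, Matrix.mul_apply, h, Prod.ext_iff]
  have hGyeq : W1 * V2 + ((C1 * B1) * Gu + Gy2) = Gy := by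
    have h1 : W1 * V2 = fromCols (C1 * A1) 0 := by
      rw [hW1, hV2, Matrix.fromCols_mul_fromBlocks]
      simp
    have h2 : (C1 * B1) * Gu = fromCols 0 ((C1 * B1) * Sel) := by
      rw [hGu, Matrix.mul_fromCols, Matrix.mul_zero]
    rw [h1, h2, hGy2, hGy]
    ext r (c | ⟨a, l⟩)
    · simp
    · by_cases h : a = 0
      · subst h
        simp [hSel, hgy, hgy2, Matrix.mul_apply, Prod.ext_iff]
      · simp [hSel, hgy, hgy2, Matrix.mul_apply, h, Prod.ext_iff]
  have hadd : (fromRows 0 (W1 * V2) : Matrix (Fin m ⊕ Fin p) _ ℝ)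
      + fromRows Gu (C1 * B1 * Gu + Gy2)
      = fromRows Gu (W1 * V2 + (C1 * B1 * Gu + Gy2)) := by
    ext (i | i) c <;> simp
  have stepB : G' = L * G2 := by
    rw [hG', hG2, hL, Matrix.fromBlocks_mul_fromRows]
    simp only [Matrix.fromRows_mul, Matrix.fromCols_mul_fromRows,
      Matrix.fromBlocks_mul_fromRows, Matrix.zero_mul, Matrix.one_mul, add_zero]
    rw [hadd, hGyeq, ← hJGu, Matrix.mul_add, ← Matrix.mul_assoc]
  -- determinant
  have hdL : IsUnit L.det := by
    have hWJ : W1 * J' = 0 := by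
      rw [hW1, hJ', Matrix.fromCols_mul_fromRows, Matrix.mul_zero, Matrix.zero_mul,
        add_zero]
    have hfact : L = (fromBlocks P' 0 0 1 : Matrix _ _ ℝ) *
        ((fromBlocks 1 0 (fromRows 0 W1) (fromBlocks 1 0 (C1 * B1) 1) : Matrix _ _ ℝ) *
          (fromBlocks 1 (fromCols J' (0 : Matrix (Fin n1 ⊕ Fin n2) (Fin p) ℝ)) 0 1
            : Matrix _ _ ℝ)) := by
      rw [Matrix.fromBlocks_multiply, Matrix.fromBlocks_multiply]
      have hz : (fromRows 0 W1 : Matrix (Fin m ⊕ Fin p) _ ℝ)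
          * fromCols J' (0 : Matrix (Fin n1 ⊕ Fin n2) (Fin p) ℝ) = 0 := by
        rw [Matrix.fromRows_mul_fromCols, hWJ]
        ext (i | i) (j | j) <;> simp [Matrix.fromBlocks]
      rw [hz]
      simp [hL, Matrix.mul_fromCols]
    rw [hfact, Matrix.det_mul, Matrix.det_mul]
    apply IsUnit.mul
    · rw [Matrix.det_fromBlocks_zero₂₁, Matrix.det_one, mul_one]
      exact hdP2
    · apply IsUnit.mul
      · simp [Matrix.det_fromBlocks_zero₁₂]
      · simp [Matrix.det_fromBlocks_zero₂₁]
  set Q' : Matrix (Fin n2) (Fin s × Fin m) ℝ :=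
    Matrix.of fun i jl => (R ^ (jl.1 : ℕ) * B2) i jl.2 with hQ'
  set NN : Matrix (Fin n2 ⊕ Fin p) (Fin s × Fin m) ℝ :=
    Matrix.of fun rr jl => Sum.elim
      (fun i => -((R ^ ((jl.1 : ℕ) + 1) * B2) i jl.2))
      (fun r => -((C2 * (R ^ (jl.1 : ℕ) * B2)) r jl.2)) rr with hNN
  have hmulR : ∀ (a : Fin s) (l : Fin m) (i : Fin n2),
      (R * Q') i (a, l) = (R ^ ((a : ℕ) + 1) * B2) i l := by
    intro a l i
    rw [show R ^ ((a : ℕ) + 1) * B2 = R * (R ^ (a : ℕ) * B2) by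
      rw [← Matrix.mul_assoc, ← pow_succ'], Matrix.mul_apply, Matrix.mul_apply]
    rfl
  have hmulC : ∀ (a : Fin s) (l : Fin m) (r : Fin p),
      (C2 * Q') r (a, l) = (C2 * (R ^ (a : ℕ) * B2)) r l := by
    intro a l r
    rw [show C2 * (R ^ (a : ℕ) * B2) = C2 * (R ^ (a:ℕ) * B2) from rfl,
      Matrix.mul_apply, Matrix.mul_apply]
    rfl
  have hNNeq : NN = -(Matrix.fromRows R C2 * Q') := by
    rw [Matrix.fromRows_mul]
    ext (i | r) ⟨a, l⟩
    · simp [hNN, ← hmulR a l i]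
    · simp [hNN, ← hmulC a l r]
  have hrankNN : NN.rank = (Matrix.fromRows R C2).rank := by
    rw [hNNeq, rank_neg', rank_mul_of_surj _ _ (surj_of_full_rank Q' (by rw [hQ]; simp))]
  -- equivalences
  set χ' : Fin m ⊕ (Fin s × Fin m) ≃ Fin (s+1) × Fin m :=
    { toFun := Sum.elim (fun l => ((0 : Fin (s+1)), l)) (fun jl => (jl.1.succ, jl.2))
      invFun := fun al => Fin.cases (Sum.inl al.2) (fun j => Sum.inr (j, al.2)) al.1
      left_inv := by rintro (l | ⟨j, l⟩) <;> simp
      right_inv := by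
        rintro ⟨a, l⟩
        induction a using Fin.cases <;> simp } with hχ'
  set χ : (Fin n1 ⊕ Fin m) ⊕ (Fin s × Fin m) ≃ Fin n1 ⊕ (Fin (s+1) × Fin m) :=
    (Equiv.sumAssoc (Fin n1) (Fin m) (Fin s × Fin m)).trans
      (Equiv.sumCongr (Equiv.refl (Fin n1)) χ') with hχ
  set ρ : (Fin n1 ⊕ Fin m) ⊕ (Fin n2 ⊕ Fin p) ≃ (Fin n1 ⊕ Fin n2) ⊕ (Fin m ⊕ Fin p) :=
    { toFun := Sum.elim (Sum.elim (Sum.inl ∘ Sum.inl) (Sum.inr ∘ Sum.inl))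
        (Sum.elim (Sum.inl ∘ Sum.inr) (Sum.inr ∘ Sum.inr))
      invFun := Sum.elim (Sum.elim (Sum.inl ∘ Sum.inl) (Sum.inr ∘ Sum.inl))
        (Sum.elim (Sum.inl ∘ Sum.inr) (Sum.inr ∘ Sum.inr))
      left_inv := by rintro ((j | l) | (i | r)) <;> rfl
      right_inv := by rintro ((j | i) | (l | r)) <;> rfl } with hρ
  have ceq : G2.submatrix ⇑ρ ⇑χ = fromBlocks 1 0 0 NN := by
    rw [hG2, hV2, hGu, hGy2]
    ext x y
    obtain ((j | l) | (i | r)) := x <;> obtain ((j' | l') | ⟨a, l'⟩) := y <;>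
      simp [hχ, hχ', hρ, hNN, hU2, hSel, hgy2, Matrix.one_apply,
        Fin.succ_ne_zero, Fin.val_succ, Nat.add_sub_cancel, eq_comm]
  have stepC : G2.rank = (n1 + m) + (Matrix.fromRows R C2).rank := by
    rw [← rank_submatrix'' G2 ρ χ, ceq, rank_fromBlocks_one, hrankNN]
    simp [Fintype.card_sum]
  have hZsurj : Function.Surjective Z.mulVecLin := by
    apply surj_of_full_rank
    rw [hPE]
    simp [Fintype.card_sum, Fintype.card_prod]
  have hrhs : D.rank = (n1 + m) + (Matrix.fromRows R C2).rank :=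
    calc D.rank = (D.submatrix ⇑er id).rank := by
          rw [show (id : Fin T → Fin T) = ⇑(Equiv.refl (Fin T)) from rfl,
            rank_submatrix'' D er (Equiv.refl _)]
      _ = (G' * Z).rank := by rw [stepA]
      _ = G'.rank := rank_mul_of_surj _ _ hZsurj
      _ = (L * G2).rank := by rw [stepB]
      _ = G2.rank := Matrix.rank_mul_eq_right_of_isUnit_det L G2 hdL
      _ = (n1 + m) + (Matrix.fromRows R C2).rank := stepC
  rw [hlhs, hrhs]
  omega
end
end

section
/- Under the unknown-input Weierstrass decomposition, unknown-input historical data, and unknown-input persistent excitation hypotheses, a triple of sequences u : ℕ → ℝ^m, x : ℕ → ℝ^n, y : ℕ → ℝ^p is a trajectory of the unknown-input descriptor system (i.e. there exists η : ℕ → ℝ^q with E x(k+1) = A x(k) + B u(k) + F η(k) and y(k) = C x(k) for all k ∈ ℕ) if and only if for every k ∈ ℕ the stacked vector col(x(k), x(k+1), u(k), y(k), y(k+1)) lies in the column space of the stacked data matrix col(X_p, X_f, U_p, Y_p, Y_f). -/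
open Matrix

noncomputable section

namespace Aux

lemma histMat_mulVec {ι : Type} (T : ℕ) (f : ℕ → ι → ℝ) (off : ℕ) (g : Fin T → ℝ) :
    histMat T f off *ᵥ g = ∑ k : Fin T, g k • f ((k : ℕ) + off) := by
  funext i
  simp [histMat, Matrix.mulVec, dotProduct, Finset.sum_apply, mul_comm]

lemma sum_smul_mulVec {a b σ : Type} [Fintype b] (t : Finset σ) (M : Matrix a b ℝ)
    (g : σ → ℝ) (v : σ → b → ℝ) :
    ∑ c ∈ t, g c • (M *ᵥ v c) = M *ᵥ (∑ c ∈ t, g c • v c) := by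
  rw [show M *ᵥ (∑ c ∈ t, g c • v c) = M.mulVecLin (∑ c ∈ t, g c • v c) from rfl, map_sum]
  simp [Matrix.mulVecLin_apply, Matrix.mulVec_smul]

lemma elim_eq_elim_iff {α β γ : Type} (f f' : α → γ) (g g' : β → γ) :
    Sum.elim f g = Sum.elim f' g' ↔ f = f' ∧ g = g' :=
  ⟨fun h => ⟨funext fun i => congrFun h (Sum.inl i), funext fun i => congrFun h (Sum.inr i)⟩,
   fun ⟨h1, h2⟩ => by rw [h1, h2]⟩

lemma comp_equiv_inj {α β γ : Type} (e : α ≃ β) (v w : α → γ) :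
    (fun i => v (e.symm i)) = (fun i => w (e.symm i)) ↔ v = w :=
  ⟨fun h => funext fun j => by simpa using congrFun h (e j), fun h => by rw [h]⟩

lemma mulVec_comp_equiv {a b c d : Type} [Fintype b] [Fintype d]
    (M : Matrix a b ℝ) (e : c ≃ a) (f : d ≃ b) (w : d → ℝ) :
    M *ᵥ (fun i => w (f.symm i)) = fun i => ((M.submatrix ⇑e ⇑f) *ᵥ w) (e.symm i) := by
  funext i
  simp only [Matrix.mulVec, dotProduct, Matrix.submatrix_apply, e.apply_symm_apply]
  exact (Fintype.sum_equiv f _ _ (fun j => by simp)).symm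

lemma mulVec_comp_id_equiv {a b c : Type} [Fintype b]
    (M : Matrix a b ℝ) (e : c ≃ a) (v : b → ℝ) :
    M *ᵥ v = fun i => ((M.submatrix ⇑e id) *ᵥ v) (e.symm i) := by
  funext i
  simp [Matrix.mulVec, dotProduct, Matrix.submatrix_apply]

lemma sum_smul_elim_comp {α β γ σ : Type} (e : α ⊕ β ≃ γ) (t : Finset σ) (g : σ → ℝ)
    (a : σ → α → ℝ) (b : σ → β → ℝ) :
    ∑ c ∈ t, g c • (fun i => Sum.elim (a c) (b c) (e.symm i))
      = fun i => Sum.elim (∑ c ∈ t, g c • a c) (∑ c ∈ t, g c • b c) (e.symm i) := by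
  funext i
  cases h : e.symm i <;> simp [Finset.sum_apply, h]

lemma combo_nilp {n2 m q T s : ℕ} (R : Matrix (Fin n2) (Fin n2) ℝ)
    (B2 : Matrix (Fin n2) (Fin m) ℝ) (F2 : Matrix (Fin n2) (Fin q) ℝ)
    (g : Fin T → ℝ) (ud' : ℕ → Fin m → ℝ) (etad' : ℕ → Fin q → ℝ)
    (uu : ℕ → Fin m → ℝ) (ee : ℕ → Fin q → ℝ) (off : ℕ)
    (h1 : ∀ j < s, ∑ c : Fin T, g c • ud' ((c : ℕ) + off + j) = uu j)
    (h2 : ∀ j < s, ∑ c : Fin T, g c • etad' ((c : ℕ) + off + j) = ee j) :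
    ∑ c : Fin T, g c •
        (-(∑ j ∈ Finset.range s, R ^ j *ᵥ (B2 *ᵥ ud' ((c : ℕ) + off + j) + F2 *ᵥ etad' ((c : ℕ) + off + j))))
      = -(∑ j ∈ Finset.range s, R ^ j *ᵥ (B2 *ᵥ uu j + F2 *ᵥ ee j)) := by
  have key : ∀ c : Fin T, g c •
        (-(∑ j ∈ Finset.range s, R ^ j *ᵥ (B2 *ᵥ ud' ((c : ℕ) + off + j) + F2 *ᵥ etad' ((c : ℕ) + off + j))))
      = -(∑ j ∈ Finset.range s, g c • (R ^ j *ᵥ (B2 *ᵥ ud' ((c : ℕ) + off + j) + F2 *ᵥ etad' ((c : ℕ) + off + j)))) := by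
    intro c; rw [smul_neg, Finset.smul_sum]
  rw [Finset.sum_congr rfl fun c _ => key c, Finset.sum_neg_distrib, neg_inj,
    Finset.sum_comm]
  refine Finset.sum_congr rfl fun j hj => ?_
  rw [sum_smul_mulVec]
  have key2 : ∀ c : Fin T, g c • (B2 *ᵥ ud' ((c : ℕ) + off + j) + F2 *ᵥ etad' ((c : ℕ) + off + j))
      = g c • (B2 *ᵥ ud' ((c : ℕ) + off + j)) + g c • (F2 *ᵥ etad' ((c : ℕ) + off + j)) := by
    intro c; rw [smul_add]
  rw [Finset.sum_congr rfl fun c _ => key2 c, Finset.sum_add_distrib,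
    sum_smul_mulVec, sum_smul_mulVec, h1 j (Finset.mem_range.mp hj), h2 j (Finset.mem_range.mp hj)]

end Aux

theorem stmt_9 (n1 n2 s m p q T : ℕ) (hs : 1 ≤ s) (hT : 1 ≤ T)
    (E A : Matrix (Fin (n1 + n2)) (Fin (n1 + n2)) ℝ)
    (B : Matrix (Fin (n1 + n2)) (Fin m) ℝ)
    (F : Matrix (Fin (n1 + n2)) (Fin q) ℝ) (hF : F.rank = q)
    (C : Matrix (Fin p) (Fin (n1 + n2)) ℝ)
    (S P : Matrix (Fin (n1 + n2)) (Fin (n1 + n2)) ℝ)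
    (hS : IsUnit S) (hP : IsUnit P)
    (A1 : Matrix (Fin n1) (Fin n1) ℝ) (R : Matrix (Fin n2) (Fin n2) ℝ)
    (B1 : Matrix (Fin n1) (Fin m) ℝ) (B2 : Matrix (Fin n2) (Fin m) ℝ)
    (F1 : Matrix (Fin n1) (Fin q) ℝ) (F2 : Matrix (Fin n2) (Fin q) ℝ)
    (C1 : Matrix (Fin p) (Fin n1) ℝ) (C2 : Matrix (Fin p) (Fin n2) ℝ)
    (hR : R ^ s = 0)
    (hE : (S * E * P).submatrix ⇑finSumFinEquiv ⇑finSumFinEquiv = Matrix.fromBlocks 1 0 0 R)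
    (hA : (S * A * P).submatrix ⇑finSumFinEquiv ⇑finSumFinEquiv = Matrix.fromBlocks A1 0 0 1)
    (hB : (S * B).submatrix ⇑finSumFinEquiv id = Matrix.fromRows B1 B2)
    (hFdec : (S * F).submatrix ⇑finSumFinEquiv id = Matrix.fromRows F1 F2)
    (hC : (C * P).submatrix id ⇑finSumFinEquiv = Matrix.fromCols C1 C2)
    (ud : ℕ → Fin m → ℝ) (etad : ℕ → Fin q → ℝ)
    (z1d : ℕ → Fin n1 → ℝ) (z2d : ℕ → Fin n2 → ℝ)
    (xd : ℕ → Fin (n1 + n2) → ℝ) (yd : ℕ → Fin p → ℝ)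
    (hz1 : ∀ k < T, z1d (k + 1) = A1 *ᵥ z1d k + B1 *ᵥ ud k + F1 *ᵥ etad k)
    (hz2 : ∀ k ≤ T, z2d k
      = -(∑ j ∈ Finset.range s, (R ^ j *ᵥ (B2 *ᵥ ud (k + j) + F2 *ᵥ etad (k + j)))))
    (hxd : ∀ k ≤ T, xd k = P *ᵥ (fun i => Sum.elim (z1d k) (z2d k) (finSumFinEquiv.symm i)))
    (hyd : ∀ k ≤ T, yd k = C *ᵥ xd k)
    (hPE : (Matrix.of fun (i : Fin n1 ⊕ (Fin (s + 1) × (Fin m ⊕ Fin q))) (k : Fin T) =>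
        Sum.elim (z1d (k : ℕ))
          (fun jl => Sum.elim (ud ((k : ℕ) + (jl.1 : ℕ))) (etad ((k : ℕ) + (jl.1 : ℕ))) jl.2)
          i).rank = n1 + (s + 1) * (m + q))
    (u : ℕ → Fin m → ℝ) (x : ℕ → Fin (n1 + n2) → ℝ) (y : ℕ → Fin p → ℝ) :
    ((∃ η : ℕ → Fin q → ℝ,
        ∀ k : ℕ, E *ᵥ x (k + 1) = A *ᵥ x k + B *ᵥ u k + F *ᵥ η k) ∧
      (∀ k : ℕ, y k = C *ᵥ x k))
      ↔ (∀ k : ℕ, ∃ g : Fin T → ℝ,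
          histMat T xd 0 *ᵥ g = x k ∧
          histMat T xd 1 *ᵥ g = x (k + 1) ∧
          histMat T ud 0 *ᵥ g = u k ∧
          histMat T yd 0 *ᵥ g = y k ∧
          histMat T yd 1 *ᵥ g = y (k + 1)) := by
  have hSdet : IsUnit S.det := (Matrix.isUnit_iff_isUnit_det S).mp hS
  have hPdet : IsUnit P.det := (Matrix.isUnit_iff_isUnit_det P).mp hP
  -- the key block-coordinate characterization of the dynamics
  have key : ∀ (za1 zb1 : Fin n1 → ℝ) (za2 zb2 : Fin n2 → ℝ) (uu : Fin m → ℝ) (ee : Fin q → ℝ),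
      (E *ᵥ (P *ᵥ fun i => Sum.elim zb1 zb2 (finSumFinEquiv.symm i))
        = A *ᵥ (P *ᵥ fun i => Sum.elim za1 za2 (finSumFinEquiv.symm i)) + B *ᵥ uu + F *ᵥ ee)
      ↔ (zb1 = A1 *ᵥ za1 + B1 *ᵥ uu + F1 *ᵥ ee
          ∧ R *ᵥ zb2 = za2 + B2 *ᵥ uu + F2 *ᵥ ee) := by
    intro za1 zb1 za2 zb2 uu ee
    have hScancel : ∀ v w : Fin (n1 + n2) → ℝ, (v = w) ↔ (S *ᵥ v = S *ᵥ w) := by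
      intro v w
      constructor
      · rintro rfl; rfl
      · intro h
        have h2 := congrArg (fun t => S⁻¹ *ᵥ t) h
        simpa [Matrix.mulVec_mulVec, Matrix.nonsing_inv_mul S hSdet] using h2
    rw [hScancel]
    have lhs1 : S *ᵥ (E *ᵥ (P *ᵥ fun i => Sum.elim zb1 zb2 (finSumFinEquiv.symm i)))
        = fun i => Sum.elim zb1 (R *ᵥ zb2) (finSumFinEquiv.symm i) := by
      rw [Matrix.mulVec_mulVec, Matrix.mulVec_mulVec,
        Aux.mulVec_comp_equiv (S * E * P) finSumFinEquiv finSumFinEquiv, hE]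
      funext i
      rw [Matrix.fromBlocks_mulVec]
      cases h : finSumFinEquiv.symm i <;> simp [h]
    have rhs1 : S *ᵥ (A *ᵥ (P *ᵥ fun i => Sum.elim za1 za2 (finSumFinEquiv.symm i))
          + B *ᵥ uu + F *ᵥ ee)
        = fun i => Sum.elim (A1 *ᵥ za1 + B1 *ᵥ uu + F1 *ᵥ ee) (za2 + B2 *ᵥ uu + F2 *ᵥ ee)
            (finSumFinEquiv.symm i) := by
      simp only [Matrix.mulVec_add]
      rw [Matrix.mulVec_mulVec, Matrix.mulVec_mulVec, Matrix.mulVec_mulVec, Matrix.mulVec_mulVec]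
      rw [Aux.mulVec_comp_equiv (S * A * P) finSumFinEquiv finSumFinEquiv, hA,
        Aux.mulVec_comp_id_equiv (S * B) finSumFinEquiv, hB,
        Aux.mulVec_comp_id_equiv (S * F) finSumFinEquiv, hFdec]
      funext i
      rw [Matrix.fromBlocks_mulVec]
      cases h : finSumFinEquiv.symm i <;> simp [h] <;> abel
    rw [lhs1, rhs1, Aux.comp_equiv_inj, Aux.elim_eq_elim_iff]
  -- shifting identity for nilpotent sums
  have hshift : ∀ (uu : ℕ → Fin m → ℝ) (ee : ℕ → Fin q → ℝ) (k : ℕ),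
      ∑ j ∈ Finset.range s, R ^ (j + 1) *ᵥ (B2 *ᵥ uu (k + 1 + j) + F2 *ᵥ ee (k + 1 + j))
        = ∑ j ∈ Finset.range s, R ^ j *ᵥ (B2 *ᵥ uu (k + j) + F2 *ᵥ ee (k + j))
            - (B2 *ᵥ uu k + F2 *ᵥ ee k) := by
    intro uu ee k
    set f : ℕ → Fin n2 → ℝ := fun j => R ^ j *ᵥ (B2 *ᵥ uu (k + j) + F2 *ᵥ ee (k + j)) with hf
    have h1 := Finset.sum_range_succ f s
    have h2 := Finset.sum_range_succ' f s
    have hfs : f s = 0 := by rw [hf]; simp only [hR, Matrix.zero_mulVec]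
    have hf0 : f 0 = B2 *ᵥ uu k + F2 *ᵥ ee k := by
      rw [hf]; simp only [pow_zero, Matrix.one_mulVec, add_zero]
    rw [h1, hfs, add_zero, hf0] at h2
    have h3 : ∑ j ∈ Finset.range s, f (j + 1)
        = ∑ j ∈ Finset.range s, f j - (B2 *ᵥ uu k + F2 *ᵥ ee k) :=
      eq_sub_of_add_eq h2.symm
    have h4 : ∀ j ∈ Finset.range s,
        R ^ (j + 1) *ᵥ (B2 *ᵥ uu (k + 1 + j) + F2 *ᵥ ee (k + 1 + j)) = f (j + 1) := by
      intro j _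
      rw [hf]
      rw [show k + 1 + j = k + (j + 1) from by omega]
    rw [Finset.sum_congr rfl h4, h3]
  -- the historical data satisfies the descriptor dynamics
  have hdata : ∀ k, k + 1 ≤ T → E *ᵥ xd (k + 1) = A *ᵥ xd k + B *ᵥ ud k + F *ᵥ etad k := by
    intro k hk
    rw [hxd (k + 1) hk, hxd k (by omega), key]
    refine ⟨hz1 k (by omega), ?_⟩
    rw [hz2 (k + 1) hk, hz2 k (by omega), Matrix.mulVec_neg]
    have hRsum : R *ᵥ ∑ j ∈ Finset.range s, R ^ j *ᵥ (B2 *ᵥ ud (k + 1 + j) + F2 *ᵥ etad (k + 1 + j))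
        = ∑ j ∈ Finset.range s, R ^ (j + 1) *ᵥ (B2 *ᵥ ud (k + 1 + j) + F2 *ᵥ etad (k + 1 + j)) := by
      rw [show ∀ w, R *ᵥ w = R.mulVecLin w from fun _ => rfl, map_sum]
      refine Finset.sum_congr rfl fun j _ => ?_
      rw [Matrix.mulVecLin_apply, Matrix.mulVec_mulVec, ← pow_succ']
    rw [hRsum, hshift ud etad k]
    abel
  -- persistent excitation gives surjectivity
  set M0 : Matrix (Fin n1 ⊕ (Fin (s + 1) × (Fin m ⊕ Fin q))) (Fin T) ℝ :=
    Matrix.of fun i k =>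
      Sum.elim (z1d (k : ℕ))
        (fun jl => Sum.elim (ud ((k : ℕ) + (jl.1 : ℕ))) (etad ((k : ℕ) + (jl.1 : ℕ))) jl.2) i
    with hM0
  have hsurj : ∀ v, ∃ g, M0 *ᵥ g = v := by
    have hrange : LinearMap.range M0.mulVecLin = ⊤ := by
      apply Submodule.eq_top_of_finrank_eq
      have hcard : Module.finrank ℝ ((Fin n1 ⊕ (Fin (s + 1) × (Fin m ⊕ Fin q))) → ℝ)
          = n1 + (s + 1) * (m + q) := by
        simp [Module.finrank_fintype_fun_eq_card]
      rw [hcard]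
      exact hPE
    intro v
    obtain ⟨g, hg⟩ := LinearMap.range_eq_top.mp hrange v
    exact ⟨g, hg⟩
  constructor
  · rintro ⟨⟨η, hdyn⟩, hout⟩
    -- coordinates of the trajectory
    set z1 : ℕ → Fin n1 → ℝ := fun k i => (P⁻¹ *ᵥ x k) (finSumFinEquiv (Sum.inl i)) with hz1def
    set z2 : ℕ → Fin n2 → ℝ := fun k i => (P⁻¹ *ᵥ x k) (finSumFinEquiv (Sum.inr i)) with hz2def
    have hx : ∀ k, x k = P *ᵥ fun i => Sum.elim (z1 k) (z2 k) (finSumFinEquiv.symm i) := by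
      intro k
      have hfun : (fun i => Sum.elim (z1 k) (z2 k) (finSumFinEquiv.symm i)) = P⁻¹ *ᵥ x k := by
        funext i
        obtain ⟨j, rfl⟩ := finSumFinEquiv.surjective i
        rw [Equiv.symm_apply_apply]
        cases j <;> rfl
      rw [hfun, Matrix.mulVec_mulVec, Matrix.mul_nonsing_inv P hPdet, Matrix.one_mulVec]
    have hblocks : ∀ k, z1 (k + 1) = A1 *ᵥ z1 k + B1 *ᵥ u k + F1 *ᵥ η k
        ∧ R *ᵥ z2 (k + 1) = z2 k + B2 *ᵥ u k + F2 *ᵥ η k := by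
      intro k
      rw [← key]
      rw [← hx, ← hx]
      exact hdyn k
    have hz2x : ∀ k, z2 k
        = -(∑ j ∈ Finset.range s, R ^ j *ᵥ (B2 *ᵥ u (k + j) + F2 *ᵥ η (k + j))) := by
      intro k
      have hiter : ∀ t, z2 k = R ^ t *ᵥ z2 (k + t)
          - ∑ j ∈ Finset.range t, R ^ j *ᵥ (B2 *ᵥ u (k + j) + F2 *ᵥ η (k + j)) := by
        intro t
        induction t with
        | zero => simp
        | succ t ih =>
          have hrec : z2 (k + t) = R *ᵥ z2 (k + t + 1) - (B2 *ᵥ u (k + t) + F2 *ᵥ η (k + t)) := by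
            rw [(hblocks (k + t)).2]; abel
          rw [ih, hrec, Matrix.mulVec_sub, Matrix.mulVec_mulVec, ← pow_succ,
            Finset.sum_range_succ, show k + (t + 1) = k + t + 1 from by omega]
          abel
      have hfin := hiter s
      rw [hR, Matrix.zero_mulVec] at hfin
      simpa using hfin
    intro k
    obtain ⟨g, hg⟩ := hsurj
      (Sum.elim (z1 k) fun jl => Sum.elim (u (k + (jl.1 : ℕ))) (η (k + (jl.1 : ℕ))) jl.2)
    have hgz1 : ∑ c : Fin T, g c • z1d (c : ℕ) = z1 k := by
      funext i
      have h := congrFun hg (Sum.inl i)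
      simpa [hM0, Matrix.mulVec, dotProduct, Finset.sum_apply, mul_comm] using h
    have hgu : ∀ j : Fin (s + 1), ∑ c : Fin T, g c • ud ((c : ℕ) + (j : ℕ)) = u (k + (j : ℕ)) := by
      intro j; funext i
      have h := congrFun hg (Sum.inr (j, Sum.inl i))
      simpa [hM0, Matrix.mulVec, dotProduct, Finset.sum_apply, mul_comm] using h
    have hge : ∀ j : Fin (s + 1), ∑ c : Fin T, g c • etad ((c : ℕ) + (j : ℕ)) = η (k + (j : ℕ)) := by
      intro j; funext i
      have h := congrFun hg (Sum.inr (j, Sum.inr i))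
      simpa [hM0, Matrix.mulVec, dotProduct, Finset.sum_apply, mul_comm] using h
    have hguN : ∀ j ≤ s, ∑ c : Fin T, g c • ud ((c : ℕ) + j) = u (k + j) := by
      intro j hj
      have h := hgu ⟨j, by omega⟩
      simpa using h
    have hgeN : ∀ j ≤ s, ∑ c : Fin T, g c • etad ((c : ℕ) + j) = η (k + j) := by
      intro j hj
      have h := hge ⟨j, by omega⟩
      simpa using h
    have hgz2N : ∀ off ≤ 1, ∑ c : Fin T, g c • z2d ((c : ℕ) + off) = z2 (k + off) := by
      intro off hoff
      have hterm : ∀ c : Fin T, g c • z2d ((c : ℕ) + off)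
          = g c • (-(∑ j ∈ Finset.range s,
              R ^ j *ᵥ (B2 *ᵥ ud ((c : ℕ) + off + j) + F2 *ᵥ etad ((c : ℕ) + off + j)))) := by
        intro c
        rw [hz2 ((c : ℕ) + off) (by have := c.isLt; omega)]
      rw [Finset.sum_congr rfl fun c _ => hterm c,
        Aux.combo_nilp R B2 F2 g ud etad (fun j => u (k + off + j)) (fun j => η (k + off + j)) off
          (fun j hj => by
            have h := hguN (off + j) (by omega)
            simpa only [← add_assoc] using h)
          (fun j hj => by
            have h := hgeN (off + j) (by omega)
            simpa only [← add_assoc] using h)]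
      exact (hz2x (k + off)).symm
    have hgz1f : ∑ c : Fin T, g c • z1d ((c : ℕ) + 1) = z1 (k + 1) := by
      have hterm : ∀ c : Fin T, g c • z1d ((c : ℕ) + 1)
          = g c • (A1 *ᵥ z1d (c : ℕ)) + g c • (B1 *ᵥ ud (c : ℕ)) + g c • (F1 *ᵥ etad (c : ℕ)) := by
        intro c; rw [hz1 (c : ℕ) c.isLt, smul_add, smul_add]
      rw [Finset.sum_congr rfl fun c _ => hterm c, Finset.sum_add_distrib, Finset.sum_add_distrib,
        Aux.sum_smul_mulVec, Aux.sum_smul_mulVec, Aux.sum_smul_mulVec, hgz1]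
      have hu0 : ∑ c : Fin T, g c • ud (c : ℕ) = u k := by simpa using hguN 0 (by omega)
      have he0 : ∑ c : Fin T, g c • etad (c : ℕ) = η k := by simpa using hgeN 0 (by omega)
      rw [hu0, he0]
      exact ((hblocks k).1).symm
    have hXp : histMat T xd 0 *ᵥ g = x k := by
      rw [Aux.histMat_mulVec]
      have hterm : ∀ c : Fin T, g c • xd ((c : ℕ) + 0)
          = g c • (P *ᵥ fun i => Sum.elim (z1d (c : ℕ)) (z2d (c : ℕ)) (finSumFinEquiv.symm i)) := by
        intro c
        rw [add_zero, hxd (c : ℕ) (le_of_lt c.isLt)]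
      rw [Finset.sum_congr rfl fun c _ => hterm c, Aux.sum_smul_mulVec, hx k]
      congr 1
      rw [Aux.sum_smul_elim_comp, hgz1]
      have h2 := hgz2N 0 (by omega)
      simp only [add_zero] at h2
      rw [h2]
    have hXf : histMat T xd 1 *ᵥ g = x (k + 1) := by
      rw [Aux.histMat_mulVec]
      have hterm : ∀ c : Fin T, g c • xd ((c : ℕ) + 1)
          = g c • (P *ᵥ fun i =>
              Sum.elim (z1d ((c : ℕ) + 1)) (z2d ((c : ℕ) + 1)) (finSumFinEquiv.symm i)) := by
        intro c
        rw [hxd ((c : ℕ) + 1) (by have := c.isLt; omega)]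
      rw [Finset.sum_congr rfl fun c _ => hterm c, Aux.sum_smul_mulVec, hx (k + 1)]
      congr 1
      rw [Aux.sum_smul_elim_comp, hgz1f, hgz2N 1 le_rfl]
    have hUp : histMat T ud 0 *ᵥ g = u k := by
      rw [Aux.histMat_mulVec]
      simpa using hguN 0 (by omega)
    have hYp : histMat T yd 0 *ᵥ g = y k := by
      rw [Aux.histMat_mulVec]
      have hterm : ∀ c : Fin T, g c • yd ((c : ℕ) + 0) = g c • (C *ᵥ xd ((c : ℕ) + 0)) := by
        intro c
        rw [hyd ((c : ℕ) + 0) (by have := c.isLt; omega)]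
      rw [Finset.sum_congr rfl fun c _ => hterm c, Aux.sum_smul_mulVec,
        ← Aux.histMat_mulVec T xd 0 g, hXp, hout k]
    have hYf : histMat T yd 1 *ᵥ g = y (k + 1) := by
      rw [Aux.histMat_mulVec]
      have hterm : ∀ c : Fin T, g c • yd ((c : ℕ) + 1) = g c • (C *ᵥ xd ((c : ℕ) + 1)) := by
        intro c
        rw [hyd ((c : ℕ) + 1) (by have := c.isLt; omega)]
      rw [Finset.sum_congr rfl fun c _ => hterm c, Aux.sum_smul_mulVec,
        ← Aux.histMat_mulVec T xd 1 g, hXf, hout (k + 1)]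
    exact ⟨g, hXp, hXf, hUp, hYp, hYf⟩
  · intro h
    choose g hg1 hg2 hg3 hg4 hg5 using h
    refine ⟨⟨fun k => histMat T etad 0 *ᵥ g k, fun k => ?_⟩, fun k => ?_⟩
    · show E *ᵥ x (k + 1) = A *ᵥ x k + B *ᵥ u k + F *ᵥ (histMat T etad 0 *ᵥ g k)
      rw [← hg2 k, ← hg1 k, ← hg3 k, Aux.histMat_mulVec, Aux.histMat_mulVec,
        Aux.histMat_mulVec, Aux.histMat_mulVec]
      rw [(Aux.sum_smul_mulVec Finset.univ E (g k) (fun c => xd ((c : ℕ) + 1))).symm,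
        (Aux.sum_smul_mulVec Finset.univ A (g k) (fun c => xd ((c : ℕ) + 0))).symm,
        (Aux.sum_smul_mulVec Finset.univ B (g k) (fun c => ud ((c : ℕ) + 0))).symm,
        (Aux.sum_smul_mulVec Finset.univ F (g k) (fun c => etad ((c : ℕ) + 0))).symm]
      have hterm : ∀ c : Fin T, g k c • (E *ᵥ xd ((c : ℕ) + 1))
          = g k c • (A *ᵥ xd ((c : ℕ) + 0)) + g k c • (B *ᵥ ud ((c : ℕ) + 0))
            + g k c • (F *ᵥ etad ((c : ℕ) + 0)) := by
        intro c
        have hd := hdata (c : ℕ) c.isLt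
        simp only [add_zero]
        rw [hd, smul_add, smul_add]
      rw [Finset.sum_congr rfl fun c _ => hterm c, Finset.sum_add_distrib, Finset.sum_add_distrib]
    · rw [← hg4 k, ← hg1 k, Aux.histMat_mulVec, Aux.histMat_mulVec,
        (Aux.sum_smul_mulVec Finset.univ C (g k) (fun c => xd ((c : ℕ) + 0))).symm]
      refine Finset.sum_congr rfl fun c _ => ?_
      rw [hyd ((c : ℕ) + 0) (by have := c.isLt; omega)]
end
end
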